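/- arXiv:1404.6067 — 6 statements merged into one kernel-verified Lean document; each statement's English description precedes it below -/
import Mathlib

section
/- For any two matroids M and N on a common finite ground set E, there is a maximal wave, i.e., a wave (X, S^M, S^N) such that for every wave (Y, T^M, T^N) we have Y ⊆ X. Moreover, this maximal wave contains every element that is contained in any wave. -/
open Matroid Set

variable {α : Type*}

/-- Deletion of a set from a matroid: restriction to the complement. -/
def Matroid.del (M : Matroid α) (D : Set α) : Matroid α := M ↾ (M.E \ D)

/-- Contraction of a set in a matroid, defined by duality. -/
def Matroid.con (M : Matroid α) (C : Set α) : Matroid α := ((M✶.del C))✶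

/-- A circuit: a minimal dependent set. -/
def IsCircuitOf (M : Matroid α) (C : Set α) : Prop := Minimal M.Dep C

/-- A wave for the pair `(M, N)`: disjoint sets `SM, SN ⊆ X` spanning `X`
in the respective restrictions. -/
def IsWave (M N : Matroid α) (X SM SN : Set α) : Prop :=
  SM ⊆ X ∧ SN ⊆ X ∧ X ⊆ M.E ∧ Disjoint SM SN ∧
  (M ↾ X).Spanning SM ∧ (N ↾ X).Spanning SN

lemma restrict_spanning_iff_cl {M : Matroid α} {X S : Set α} (hX : X ⊆ M.E) (hS : S ⊆ X) :
    (M ↾ X).Spanning S ↔ X ⊆ M.closure S := by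
  rw [Matroid.spanning_iff_exists_isBase_subset (show S ⊆ (M ↾ X).E from hS)]
  constructor
  · rintro ⟨B, hB, hBS⟩
    rw [Matroid.isBase_restrict_iff hX] at hB
    exact hB.subset_closure.trans (M.closure_subset_closure hBS)
  · intro h
    obtain ⟨I, hI⟩ := M.exists_isBasis S (hS.trans hX)
    refine ⟨I, (Matroid.isBase_restrict_iff hX).2
      (hI.indep.isBasis_of_subset_of_subset_closure (hI.subset.trans hS) ?_), hI.subset⟩
    rw [hI.closure_eq_closure]
    exact h

lemma wave_union {M N : Matroid α} {X SM SN Y TM TN : Set α} (hE : M.E = N.E)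
    (h1 : IsWave M N X SM SN) (h2 : IsWave M N Y TM TN) :
    IsWave M N (X ∪ Y) (SM ∪ (TM \ X)) (SN ∪ (TN \ X)) := by
  obtain ⟨hSM, hSN, hXE, hdis, hsp1, hsp2⟩ := h1
  obtain ⟨hTM, hTN, hYE, hdis', hsp1', hsp2'⟩ := h2
  have hXY : X ∪ Y ⊆ M.E := union_subset hXE hYE
  have hSMX : SM ∪ (TM \ X) ⊆ X ∪ Y :=
    union_subset (hSM.trans subset_union_left)
      ((diff_subset.trans hTM).trans subset_union_right)
  have hSNX : SN ∪ (TN \ X) ⊆ X ∪ Y :=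
    union_subset (hSN.trans subset_union_left)
      ((diff_subset.trans hTN).trans subset_union_right)
  refine ⟨hSMX, hSNX, hXY, ?_, ?_, ?_⟩
  · refine disjoint_union_left.2 ⟨disjoint_union_right.2 ⟨hdis, ?_⟩,
      disjoint_union_right.2 ⟨?_, ?_⟩⟩
    · exact Disjoint.mono_left hSM (disjoint_sdiff_right)
    · exact Disjoint.mono_right hSN (disjoint_sdiff_left)
    · exact hdis'.mono diff_subset diff_subset
  · rw [restrict_spanning_iff_cl hXY hSMX]
    rw [restrict_spanning_iff_cl hXE hSM] at hsp1
    rw [restrict_spanning_iff_cl hYE hTM] at hsp1'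
    have hTMc : TM ⊆ M.closure (SM ∪ (TM \ X)) := by
      intro a ha
      by_cases haX : a ∈ X
      · exact M.closure_subset_closure subset_union_left (hsp1 haX)
      · exact M.subset_closure _ (hSMX.trans hXY) (Or.inr ⟨ha, haX⟩)
    have hcl : M.closure TM ⊆ M.closure (SM ∪ (TM \ X)) := by
      rw [← M.closure_closure (SM ∪ (TM \ X))]
      exact M.closure_subset_closure hTMc
    exact union_subset ((hsp1.trans (M.closure_subset_closure subset_union_left)))
      (hsp1'.trans hcl)
  · have hXE' : X ⊆ N.E := hE ▸ hXE
    have hYE' : Y ⊆ N.E := hE ▸ hYE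
    have hXY' : X ∪ Y ⊆ N.E := union_subset hXE' hYE'
    rw [restrict_spanning_iff_cl hXY' hSNX]
    rw [restrict_spanning_iff_cl hXE' hSN] at hsp2
    rw [restrict_spanning_iff_cl hYE' hTN] at hsp2'
    have hTNc : TN ⊆ N.closure (SN ∪ (TN \ X)) := by
      intro a ha
      by_cases haX : a ∈ X
      · exact N.closure_subset_closure subset_union_left (hsp2 haX)
      · exact N.subset_closure _ (hSNX.trans hXY') (Or.inr ⟨ha, haX⟩)
    have hcl : N.closure TN ⊆ N.closure (SN ∪ (TN \ X)) := by
      rw [← N.closure_closure (SN ∪ (TN \ X))]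
      exact N.closure_subset_closure hTNc
    exact union_subset ((hsp2.trans (N.closure_subset_closure subset_union_left)))
      (hsp2'.trans hcl)

/-- There is a maximal wave, containing every element contained in any wave. -/
theorem maximal_wave_exists (M N : Matroid α) (hE : M.E = N.E) (hfin : M.E.Finite) :
    ∃ X SM SN, IsWave M N X SM SN ∧
      ∀ Y TM TN, IsWave M N Y TM TN → Y ⊆ X := by
  set W : Set (Set α) := {X | ∃ SM SN, IsWave M N X SM SN} with hW
  have hempty : (∅ : Set α) ∈ W := by
    refine ⟨∅, ∅, subset_rfl, subset_rfl, empty_subset _, disjoint_empty _, ?_, ?_⟩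
    · rw [restrict_spanning_iff_cl (empty_subset _) subset_rfl]
      exact empty_subset _
    · rw [restrict_spanning_iff_cl (empty_subset _) subset_rfl]
      exact empty_subset _
  have hWfin : W.Finite := by
    apply hfin.finite_subsets.subset
    rintro X ⟨SM, SN, h⟩
    exact h.2.2.1
  obtain ⟨X, hXW, hmax⟩ : ∃ X ∈ W, ∀ X' ∈ W, id X ≤ id X' → id X = id X' := by
    obtain ⟨X, hXW, hmax⟩ := Set.Finite.exists_maximalFor id W hWfin ⟨∅, hempty⟩
    exact ⟨X, hXW, fun X' h h' => le_antisymm h' (hmax h h')⟩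
  obtain ⟨SM, SN, hwave⟩ := hXW
  refine ⟨X, SM, SN, hwave, fun Y TM TN hY => ?_⟩
  have hunion : X ∪ Y ∈ W := ⟨_, _, wave_union hE hwave hY⟩
  have := hmax _ hunion (subset_union_left)
  simp only [id] at this
  rw [this]
  exact subset_union_right
end

section
/- Let (X, S^M, S^N) be a wave for a pair (M, N) of matroids on the same ground set E, and let (Y, T^M, T^N) be a wave for the pair (M/X, N/X) of contractions. Then (X ∪ Y, S^M ∪ T^M, S^N ∪ T^N) is a wave for (M, N). -/
open Matroid Set

variable {α : Type*}

lemma con_ground (M : Matroid α) (X : Set α) : (M.con X).E = M.E \ X := rfl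

/-- Independence in the contraction, via duality. -/
lemma con_indep_iff {M : Matroid α} {X I : Set α} (hX : X ⊆ M.E) :
    (M.con X).Indep I ↔ I ⊆ M.E \ X ∧ ∃ B, M.IsBase B ∧ M.IsBasis (B ∩ X) X ∧ I ⊆ B := by
  have hXE : M.E \ X ⊆ M✶.E := by rw [dual_ground]; exact diff_subset
  rw [Matroid.con, Matroid.del, dual_ground, dual_indep_iff_exists']
  simp only [restrict_ground_eq]
  constructor
  · rintro ⟨hIE, B, hB, hdisj⟩
    rw [isBase_restrict_iff' ] at hB
    have hB' : M✶.IsBasis B (M.E \ X) := by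
      rw [isBasis'_iff_isBasis (by rwa [dual_ground])] at hB
      exact hB
    obtain ⟨B₁, hB₁, hBB₁⟩ := hB'.indep.exists_isBase_superset
    have hB₁i : B₁ ∩ (M.E \ X) = B := by
      refine (hB'.eq_of_subset_indep (hB₁.indep.subset inter_subset_left)
        (subset_inter hBB₁ hB'.subset) inter_subset_right).symm
    have hB₀ : M.IsBase (M.E \ B₁) := hB₁.compl_isBase_of_dual
    refine ⟨hIE, M.E \ B₁, hB₀, ?_, ?_⟩
    · have := (hB₀.inter_isBasis_iff_compl_inter_isBasis_dual hX).2 ?_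
      · exact this
      · rwa [diff_diff_cancel_left (hB₁.subset_ground.trans_eq M.dual_ground), hB₁i]
    · intro e he
      refine ⟨hIE he |>.1, fun heB₁ ↦ ?_⟩
      have : e ∈ B := by rw [← hB₁i]; exact ⟨heB₁, hIE he⟩
      exact hdisj.ne_of_mem he this rfl
  · rintro ⟨hIE, B₀, hB₀, hbasis, hIB₀⟩
    refine ⟨hIE, (M.E \ B₀) ∩ (M.E \ X), ?_, ?_⟩
    · rw [isBase_restrict_iff (by rwa [dual_ground] ) ]
      exact (hB₀.inter_isBasis_iff_compl_inter_isBasis_dual hX).1 hbasis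
    · exact Disjoint.mono_right inter_subset_left
        (disjoint_sdiff_right.mono_left hIB₀)

/-- Inserting an element outside the closure keeps independence in the contraction. -/
lemma con_insert_indep {M : Matroid α} {X C : Set α} {e : α} (hX : X ⊆ M.E)
    (hC : (M.con X).Indep C) (he : e ∈ M.E \ X) (hecl : e ∉ M.closure (X ∪ C)) :
    (M.con X).Indep (insert e C) := by
  rw [con_indep_iff hX] at hC ⊢
  obtain ⟨hCE, B₀, hB₀, hbasis, hCB₀⟩ := hC
  have hJi : M.Indep (C ∪ B₀ ∩ X) :=
    hB₀.indep.subset (union_subset hCB₀ inter_subset_left)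
  have hecl' : e ∉ M.closure (C ∪ B₀ ∩ X) := fun h ↦ hecl <|
    M.closure_subset_closure (union_subset (hbasis.subset.trans subset_union_left)
      (subset_union_right)) (by rwa [union_comm] at h)
  have heCJ : e ∉ C ∪ B₀ ∩ X := fun h ↦ hecl' <| M.subset_closure _ hJi.subset_ground h
  have hins : M.Indep (insert e (C ∪ B₀ ∩ X)) := by
    rw [hJi.insert_indep_iff_of_notMem heCJ]
    exact ⟨he.1, hecl'⟩
  obtain ⟨B₁, hB₁, hsub⟩ := hins.exists_isBase_superset
  have hJB₁ : B₀ ∩ X ⊆ B₁ ∩ X := subset_inter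
    (subset_union_right.trans ((subset_insert _ _).trans hsub)) inter_subset_right
  have hB₁X : M.IsBasis (B₁ ∩ X) X :=
    hbasis.eq_of_subset_indep (hB₁.indep.subset inter_subset_left) hJB₁
      inter_subset_right ▸ hbasis
  refine ⟨insert_subset he hCE, B₁, hB₁, hB₁X, insert_subset (hsub (mem_insert _ _))
    (subset_union_left.trans ((subset_insert _ _).trans hsub))⟩

/-- If `T` spans `Y` in `(M.con X) ↾ Y`, then `Y ⊆ M.closure (X ∪ T)`. -/
lemma con_restrict_spanning_subset_closure {M : Matroid α} {X Y T : Set α}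
    (hX : X ⊆ M.E) (hYE : Y ⊆ M.E \ X) (hTY : T ⊆ Y)
    (h : ((M.con X) ↾ Y).Spanning T) : Y ⊆ M.closure (X ∪ T) := by
  obtain ⟨C, hC, hCT⟩ := h.exists_isBase_subset
  have hY' : Y ⊆ (M.con X).E := by rw [con_ground]; exact hYE
  have hCb : (M.con X).IsBasis C Y := by
    rwa [isBase_restrict_iff hY'] at hC
  have hXC : X ∪ C ⊆ M.E := union_subset hX ((hCb.subset.trans hYE).trans diff_subset)
  intro e heY
  by_contra hecl
  have hecl' : e ∉ M.closure (X ∪ C) := fun h ↦ hecl <|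
    M.closure_subset_closure (union_subset_union_right _ hCT) h
  have heC : e ∉ C := fun h ↦ hecl' <| M.subset_closure _ hXC (Or.inr h)
  have : (M.con X).Indep (insert e C) :=
    con_insert_indep hX hCb.indep (hYE heY) hecl'
  exact heC (hCb.mem_of_insert_indep heY this)

/-- Spanning in a restriction follows from a closure inclusion. -/
lemma restrict_spanning_of_subset_closure {M : Matroid α} {R S : Set α}
    (hR : R ⊆ M.E) (hSR : S ⊆ R) (h : R ⊆ M.closure S) : (M ↾ R).Spanning S := by
  obtain ⟨I, hI⟩ := M.exists_isBasis S (hSR.trans hR)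
  have hIR : M.IsBasis I R :=
    hI.indep.isBasis_of_subset_of_subset_closure (hI.subset.trans hSR)
      (h.trans_eq hI.closure_eq_closure.symm)
  exact hIR.restrict_isBase.spanning.superset hI.subset hSR

/-- If `S` spans in `M ↾ R` then `R ⊆ M.closure S`. -/
lemma restrict_spanning_subset_closure {M : Matroid α} {R S : Set α}
    (hR : R ⊆ M.E) (h : (M ↾ R).Spanning S) : R ⊆ M.closure S := by
  obtain ⟨B, hB, hBS⟩ := h.exists_isBase_subset
  rw [isBase_restrict_iff hR] at hB
  exact hB.subset_closure.trans (M.closure_subset_closure hBS)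

/-- A wave for `(M, N)` together with a wave for the contractions `(M/X, N/X)`
combine to a wave for `(M, N)`. -/
theorem wave_union_contract_wave (M N : Matroid α) (hE : M.E = N.E) (hfin : M.E.Finite)
    (X SM SN Y TM TN : Set α)
    (hX : IsWave M N X SM SN) (hY : IsWave (M.con X) (N.con X) Y TM TN) :
    IsWave M N (X ∪ Y) (SM ∪ TM) (SN ∪ TN) := by
  obtain ⟨hSMX, hSNX, hXE, hdisjX, hSMsp, hSNsp⟩ := hX
  obtain ⟨hTMY, hTNY, hYE, hdisjY, hTMsp, hTNsp⟩ := hY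
  rw [con_ground] at hYE
  have hXEN : X ⊆ N.E := hE ▸ hXE
  have hYEN : Y ⊆ N.E \ X := by rw [← hE]; exact hYE
  have hYE' : Y ⊆ M.E := hYE.trans diff_subset
  have hXYE : X ∪ Y ⊆ M.E := union_subset hXE hYE'
  -- X is in the closure of SM (resp. SN)
  have hXclM : X ⊆ M.closure SM := restrict_spanning_subset_closure hXE hSMsp
  have hXclN : X ⊆ N.closure SN := restrict_spanning_subset_closure hXEN hSNsp
  -- Y is in the closure of X ∪ TM (resp. X ∪ TN)
  have hYclM : Y ⊆ M.closure (X ∪ TM) :=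
    con_restrict_spanning_subset_closure hXE hYE hTMY hTMsp
  have hYclN : Y ⊆ N.closure (X ∪ TN) :=
    con_restrict_spanning_subset_closure hXEN hYEN hTNY hTNsp
  -- combine closures
  have key : ∀ (K : Matroid α) (S T : Set α), X ⊆ K.E → Y ⊆ K.E → S ⊆ X → T ⊆ Y →
      X ⊆ K.closure S → Y ⊆ K.closure (X ∪ T) → X ∪ Y ⊆ K.closure (S ∪ T) := by
    intro K S T hXK hYK hSX hTY h1 h2
    have hST : S ∪ T ⊆ K.E := union_subset (hSX.trans hXK) (hTY.trans hYK)
    have hX' : X ⊆ K.closure (S ∪ T) :=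
      h1.trans (K.closure_subset_closure subset_union_left)
    have hXT : X ∪ T ⊆ K.closure (S ∪ T) :=
      union_subset hX' (subset_union_right.trans (K.subset_closure _ hST))
    exact union_subset hX'
      (h2.trans (K.closure_subset_closure_of_subset_closure hXT))
  refine ⟨union_subset_union hSMX hTMY, union_subset_union hSNX hTNY, hXYE, ?_, ?_, ?_⟩
  · -- disjointness
    have h1 : Disjoint SM TN :=
      (disjoint_sdiff_left.mono (hTNY.trans hYEN) hSMX).symm
    have h2 : Disjoint TM SN :=
      (disjoint_sdiff_left.mono (hTMY.trans hYE) hSNX)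
    exact disjoint_union_left.2 ⟨disjoint_union_right.2 ⟨hdisjX, h1⟩,
      disjoint_union_right.2 ⟨h2, hdisjY⟩⟩
  · exact restrict_spanning_of_subset_closure hXYE
      (union_subset_union hSMX hTMY)
      (key M SM TM hXE hYE' hSMX hTMY hXclM hYclM)
  · exact restrict_spanning_of_subset_closure (hE ▸ hXYE)
      (union_subset_union hSNX hTNY)
      (key N SN TN hXEN (hYEN.trans diff_subset) hSNX hTNY hXclN hYclN)
end

section
/- Let (M, N) be a pair of matroids on a common finite ground set E, and let e ∈ E. Then either there is a cohindrance focusing on e, or e is contained in some wave. -/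
open Matroid Set

variable {α : Type*}

set_option maxHeartbeats 1000000

namespace Matroid

variable {M : Matroid α} {I J X Y R Z S : Set α} {e : α}

noncomputable def rkn (M : Matroid α) (X : Set α) : ℕ :=
  (M.exists_isBasis' X).choose.ncard

lemma IsBasis'.rkn_eq (hI : M.IsBasis' I X) : M.rkn X = I.ncard := by
  have h := (M.exists_isBasis' X).choose_spec
  rw [rkn, Set.ncard_def, h.encard_eq_encard hI, ← Set.ncard_def]

lemma exists_basis'_rkn (M : Matroid α) (X : Set α) :
    ∃ I, M.IsBasis' I X ∧ M.rkn X = I.ncard :=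
  ⟨_, (M.exists_isBasis' X).choose_spec, rfl⟩

lemma Indep.finite_of_ground (hI : M.Indep I) (hfin : M.E.Finite) : I.Finite :=
  hfin.subset hI.subset_ground

lemma ncard_le_rkn (hfin : M.E.Finite) (hI : M.Indep I) (hIX : I ⊆ X) :
    I.ncard ≤ M.rkn X := by
  obtain ⟨J, hJ, hIJ⟩ := hI.subset_isBasis'_of_subset hIX
  rw [hJ.rkn_eq]
  exact Set.ncard_le_ncard hIJ (hJ.indep.finite_of_ground hfin)

lemma rkn_le_ncard (M : Matroid α) (X : Set α) (hX : X.Finite) : M.rkn X ≤ X.ncard := by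
  obtain ⟨I, hI, h⟩ := M.exists_basis'_rkn X
  rw [h]; exact Set.ncard_le_ncard hI.subset hX

lemma rkn_mono (hfin : M.E.Finite) (hXY : X ⊆ Y) : M.rkn X ≤ M.rkn Y := by
  obtain ⟨I, hI, h⟩ := M.exists_basis'_rkn X
  rw [h]; exact ncard_le_rkn hfin hI.indep (hI.subset.trans hXY)

lemma Indep.rkn_self (hI : M.Indep I) : M.rkn I = I.ncard := hI.isBasis_self.isBasis'.rkn_eq

lemma rkn_empty (M : Matroid α) : M.rkn ∅ = 0 := by
  rw [M.empty_indep.rkn_self, Set.ncard_empty]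

lemma rkn_insert_le (hfin : M.E.Finite) : M.rkn (insert e X) ≤ M.rkn X + 1 := by
  obtain ⟨J, hJ, h⟩ := M.exists_basis'_rkn (insert e X)
  have hJfin : J.Finite := hJ.indep.finite_of_ground hfin
  have h1 : (J \ {e}).ncard ≤ M.rkn X := by
    refine ncard_le_rkn hfin (hJ.indep.subset diff_subset) (fun x hx => ?_)
    rcases hJ.subset hx.1 with h' | h'
    · exact absurd h' (by simpa using hx.2)
    · exact h'
  have h2 : J.ncard ≤ (J \ {e}).ncard + 1 := by
    by_cases heJ : e ∈ J
    · rw [Set.ncard_diff_singleton_add_one heJ hJfin]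
    · rw [Set.diff_singleton_eq_self heJ]; omega
  omega

lemma rkn_insert_of_mem_closure (he : e ∈ M.closure X) :
    M.rkn (insert e X) = M.rkn X := by
  obtain ⟨I, hI, h⟩ := M.exists_basis'_rkn X
  have hIb : M.IsBasis' I (insert e X) := by
    rw [isBasis'_iff_isBasis_closure] at hI ⊢
    rw [closure_insert_eq_of_mem_closure he]
    exact ⟨hI.1, hI.2.trans (subset_insert _ _)⟩
  rw [hIb.rkn_eq, h]

lemma rkn_insert_of_not_mem_closure (hfin : M.E.Finite) (heE : e ∈ M.E)
    (he : e ∉ M.closure X) : M.rkn (insert e X) = M.rkn X + 1 := by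
  obtain ⟨I, hI, h⟩ := M.exists_basis'_rkn X
  have hclI : M.closure I = M.closure X := hI.closure_eq_closure
  have heI : e ∉ I := fun heI => he (hclI ▸ M.subset_closure I hI.indep.subset_ground heI)
  have hind : M.Indep (insert e I) := by
    rw [insert_indep_iff]
    exact ⟨hI.indep, fun _ => ⟨heE, fun hc => he (hclI ▸ hc)⟩⟩
  have hcleq : M.closure (insert e X) = M.closure (insert e I) := by
    rw [← closure_insert_closure_eq_closure_insert, ← hclI,
      closure_insert_closure_eq_closure_insert]
  have hIb : M.IsBasis' (insert e I) (insert e X) := by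
    rw [isBasis'_iff_isBasis_closure]
    refine ⟨?_, insert_subset_insert hI.subset⟩
    rw [isBasis_iff_indep_closure]
    refine ⟨hind, by rw [hcleq], ?_⟩
    rw [hcleq]
    exact M.subset_closure _ hind.subset_ground
  rw [hIb.rkn_eq, h, Set.ncard_insert_of_notMem heI (hI.indep.finite_of_ground hfin)]

lemma rkn_submod (hfin : M.E.Finite) (X Y : Set α) :
    M.rkn (X ∪ Y) + M.rkn (X ∩ Y) ≤ M.rkn X + M.rkn Y := by
  obtain ⟨I, hI, hIcard⟩ := M.exists_basis'_rkn (X ∩ Y)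
  obtain ⟨J, hJ, hIJ⟩ := hI.indep.subset_isBasis'_of_subset (hI.subset.trans inter_subset_left)
  obtain ⟨K, hK, hJK⟩ := hJ.indep.subset_isBasis'_of_subset (hJ.subset.trans subset_union_left)
  have hKfin : K.Finite := hK.indep.finite_of_ground hfin
  have hKX : J = K ∩ X :=
    hJ.eq_of_subset_indep (hK.indep.subset inter_subset_left)
      (subset_inter hJK hJ.subset) inter_subset_right
  have hsplit : K.ncard = J.ncard + (K \ X).ncard := by
    rw [hKX]
    rw [← Set.ncard_union_eq (disjoint_sdiff_right.mono_left inter_subset_right)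
      (hKfin.subset inter_subset_left) (hKfin.subset diff_subset),
      Set.inter_union_diff]
  have hsubY : (K \ X) ∪ I ⊆ Y := by
    refine union_subset (fun x hx => ?_) (hI.subset.trans inter_subset_right)
    rcases hK.subset hx.1 with h' | h'
    · exact absurd h' hx.2
    · exact h'
  have hle : ((K \ X) ∪ I).ncard ≤ M.rkn Y :=
    ncard_le_rkn hfin (hK.indep.subset (union_subset diff_subset ((hIJ.trans hJK))))
      hsubY
  have hcard2 : ((K \ X) ∪ I).ncard = (K \ X).ncard + I.ncard :=
    Set.ncard_union_eq (disjoint_sdiff_left.mono_right (hI.subset.trans inter_subset_left))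
      (hKfin.subset diff_subset) (hI.indep.finite_of_ground hfin)
  rw [hK.rkn_eq, hIcard, hJ.rkn_eq]
  omega

lemma rkn_dual_add (hfin : M.E.Finite) (hZ : Z ⊆ M.E) :
    M✶.rkn Z + M.rkn M.E = Z.ncard + M.rkn (M.E \ Z) := by
  have hZfin : Z.Finite := hfin.subset hZ
  have hfin' : (M✶).E.Finite := by rwa [dual_ground]
  -- upper bound
  obtain ⟨J, hJ, hJcard⟩ := (M✶).exists_basis'_rkn Z
  have hJZ : J ⊆ Z := hJ.subset
  obtain ⟨B, hB, hBJ⟩ : ∃ B, M.IsBase B ∧ Disjoint J B := by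
    have h := hJ.indep
    rw [dual_indep_iff_exists (hJZ.trans hZ)] at h
    exact h
  have hBfin : B.Finite := hfin.subset hB.subset_ground
  have hBE : M.rkn M.E = B.ncard := hB.isBasis_ground.isBasis'.rkn_eq
  have hb1 : B.ncard = (B ∩ Z).ncard + (B \ Z).ncard := by
    rw [← Set.ncard_union_eq (disjoint_sdiff_right.mono_left inter_subset_right)
      (hBfin.subset inter_subset_left) (hBfin.subset diff_subset), Set.inter_union_diff]
  have hb2 : (B \ Z).ncard ≤ M.rkn (M.E \ Z) :=
    ncard_le_rkn hfin (hB.indep.subset diff_subset)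
      (fun x hx => ⟨hB.subset_ground hx.1, hx.2⟩)
  have hb3 : (B ∩ Z).ncard ≤ (Z \ J).ncard := by
    refine Set.ncard_le_ncard (fun x hx => ⟨hx.2, fun hxJ => ?_⟩) (hZfin.diff)
    exact (Set.disjoint_left.mp hBJ hxJ) hx.1
  have hb4 : (Z \ J).ncard + J.ncard = Z.ncard := Set.ncard_diff_add_ncard_of_subset hJZ hZfin
  -- lower bound
  obtain ⟨I, hI, hIcard⟩ := M.exists_basis'_rkn (M.E \ Z)
  obtain ⟨B', hB', hIB'⟩ := hI.indep.exists_isBase_superset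
  have hB'fin : B'.Finite := hfin.subset hB'.subset_ground
  have hI' : I = B' ∩ (M.E \ Z) :=
    hI.eq_of_subset_indep (hB'.indep.subset inter_subset_left)
      (subset_inter hIB' hI.subset) inter_subset_right
  have hg1 : M✶.Indep (Z \ B') := by
    rw [dual_indep_iff_exists (diff_subset.trans hZ)]
    exact ⟨B', hB', disjoint_sdiff_left⟩
  have hg2 : (Z \ B').ncard ≤ M✶.rkn Z := ncard_le_rkn hfin' hg1 diff_subset
  have hB'E : M.rkn M.E = B'.ncard := hB'.isBasis_ground.isBasis'.rkn_eq
  have hBdiff : B' \ Z = B' ∩ (M.E \ Z) := by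
    ext x
    exact ⟨fun hx => ⟨hx.1, hB'.subset_ground hx.1, hx.2⟩, fun hx => ⟨hx.1, hx.2.2⟩⟩
  have hg3 : B'.ncard = (B' ∩ Z).ncard + I.ncard := by
    rw [hI', ← hBdiff]
    rw [← Set.ncard_union_eq (disjoint_sdiff_right.mono_left inter_subset_right)
      (hB'fin.subset inter_subset_left) (hB'fin.subset diff_subset), Set.inter_union_diff]
  have hg4 : Z.ncard = (Z \ B').ncard + (B' ∩ Z).ncard := by
    rw [inter_comm, ← Set.ncard_union_eq disjoint_sdiff_inter
      (hZfin.subset diff_subset) (hZfin.subset inter_subset_left), Set.diff_union_inter]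
  omega

lemma rkn_restrict (M : Matroid α) (hXR : X ⊆ R) : (M ↾ R).rkn X = M.rkn X := by
  obtain ⟨I, hI, h⟩ := M.exists_basis'_rkn X
  have hres : (M ↾ R).IsBasis' I X := by
    rw [isBasis'_restrict_iff, inter_eq_self_of_subset_left hXR]
    exact ⟨hI, hI.subset.trans hXR⟩
  rw [hres.rkn_eq, h]

lemma restrict_spanning_iff'' (hX : X ⊆ M.E) (hS : S ⊆ X) :
    (M ↾ X).Spanning S ↔ X ⊆ M.closure S := by
  rw [spanning_iff_exists_isBase_subset (show S ⊆ (M ↾ X).E from hS)]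
  constructor
  · rintro ⟨B, hB, hBS⟩
    rw [isBase_restrict_iff hX] at hB
    exact hB.subset_closure.trans (M.closure_subset_closure hBS)
  · intro h
    obtain ⟨I, hI⟩ := M.exists_isBasis' S
    refine ⟨I, ?_, hI.subset⟩
    rw [isBase_restrict_iff hX, isBasis_iff_indep_closure]
    exact ⟨hI.indep, by rw [hI.closure_eq_closure]; exact h, hI.subset.trans hS⟩

lemma indep_singleton_of_rkn (h : M.rkn {e} = 1) : M.Indep {e} := by
  obtain ⟨I, hI, hc⟩ := M.exists_basis'_rkn {e}
  rcases subset_singleton_iff_eq.mp hI.subset with h0 | h1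
  · rw [h0, Set.ncard_empty] at hc; omega
  · rw [← h1]; exact hI.indep

end Matroid


lemma isWave_empty (M N : Matroid α) : IsWave M N ∅ ∅ ∅ :=
  ⟨subset_rfl, subset_rfl, empty_subset _, disjoint_empty _,
    by simpa using (M ↾ (∅ : Set α)).ground_spanning,
    by simpa using (N ↾ (∅ : Set α)).ground_spanning⟩

lemma isWave_union {M N : Matroid α} (hE : M.E = N.E) {X1 S1M S1N X2 S2M S2N : Set α}
    (h1 : IsWave M N X1 S1M S1N) (h2 : IsWave M N X2 S2M S2N) :
    IsWave M N (X1 ∪ X2) (S1M ∪ (S2M \ X1)) (S1N ∪ (S2N \ X1)) := by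
  obtain ⟨h1a, h1b, h1c, h1d, h1e, h1f⟩ := h1
  obtain ⟨h2a, h2b, h2c, h2d, h2e, h2f⟩ := h2
  have h1cN : X1 ⊆ N.E := hE ▸ h1c
  have h2cN : X2 ⊆ N.E := hE ▸ h2c
  rw [Matroid.restrict_spanning_iff'' h1c h1a] at h1e
  rw [Matroid.restrict_spanning_iff'' h2c h2a] at h2e
  rw [Matroid.restrict_spanning_iff'' h1cN h1b] at h1f
  rw [Matroid.restrict_spanning_iff'' h2cN h2b] at h2f
  have hsubM : S1M ∪ (S2M \ X1) ⊆ X1 ∪ X2 :=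
    union_subset_union h1a (diff_subset.trans h2a)
  have hsubN : S1N ∪ (S2N \ X1) ⊆ X1 ∪ X2 :=
    union_subset_union h1b (diff_subset.trans h2b)
  have hgr : X1 ∪ X2 ⊆ M.E := union_subset h1c h2c
  have hdisj : Disjoint (S1M ∪ (S2M \ X1)) (S1N ∪ (S2N \ X1)) := by
    rw [disjoint_union_left]
    constructor
    · rw [disjoint_union_right]
      exact ⟨h1d, disjoint_sdiff_right.mono_left h1a⟩
    · rw [disjoint_union_right]
      exact ⟨disjoint_sdiff_right.symm.mono_right h1b,
        h2d.mono diff_subset diff_subset⟩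
  have span : ∀ (P : Matroid α), P.E = M.E → ∀ S1 S2, S1 ⊆ X1 → S2 ⊆ X2 →
      X1 ⊆ P.closure S1 → X2 ⊆ P.closure S2 →
      X1 ∪ X2 ⊆ P.closure (S1 ∪ (S2 \ X1)) := by
    intro P hPE S1 S2 hS1 hS2 hc1 hc2
    have hcl1 : P.closure S1 ⊆ P.closure (S1 ∪ (S2 \ X1)) :=
      P.closure_subset_closure subset_union_left
    have hSE : S1 ∪ (S2 \ X1) ⊆ P.E := by
      rw [hPE]
      exact union_subset (hS1.trans h1c) ((diff_subset.trans hS2).trans h2c)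
    have hS2cl : S2 ⊆ P.closure (S1 ∪ (S2 \ X1)) := by
      intro x hx
      by_cases hx1 : x ∈ X1
      · exact hcl1 (hc1 hx1)
      · exact P.subset_closure _ hSE (Or.inr ⟨hx, hx1⟩)
    have hcl2 : P.closure S2 ⊆ P.closure (S1 ∪ (S2 \ X1)) :=
      closure_subset_closure_of_subset_closure hS2cl
    exact union_subset (hc1.trans hcl1) (hc2.trans hcl2)
  refine ⟨hsubM, hsubN, hgr, hdisj, ?_, ?_⟩
  · rw [Matroid.restrict_spanning_iff'' hgr hsubM]
    exact span M rfl S1M S2M h1a h2a h1e h2e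
  · rw [Matroid.restrict_spanning_iff'' (hE ▸ hgr) hsubN]
    exact span N hE.symm S1N S2N h1b h2b h1f h2f

lemma isWave_sUnion {M N : Matroid α} (hE : M.E = N.E) (S : Set (Set α)) (hS : S.Finite) :
    (∀ X ∈ S, ∃ SM SN, IsWave M N X SM SN) →
    ∃ SM SN, IsWave M N (⋃₀ S) SM SN := by
  refine Set.Finite.induction_on
    (motive := fun S _ => (∀ X ∈ S, ∃ SM SN, IsWave M N X SM SN) →
      ∃ SM SN, IsWave M N (⋃₀ S) SM SN) S hS ?_ ?_
  · intro _; rw [sUnion_empty]; exact ⟨∅, ∅, isWave_empty M N⟩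
  · intro X T hX hTfin ih h
    obtain ⟨SM2, SN2, h2⟩ := ih (fun T' hT' => h T' (mem_insert_of_mem _ hT'))
    obtain ⟨SM1, SN1, h1⟩ := h X (mem_insert _ _)
    rw [sUnion_insert]
    exact ⟨_, _, isWave_union hE h1 h2⟩
namespace Matroid

section auxsets
variable {e : α} {X Y K K' : Set α}

private lemma aux_u1 : (X ∪ insert e K) ∪ (Y ∪ K) = insert e (X ∪ Y ∪ K) := by
  ext x; simp only [Set.mem_union, Set.mem_insert_iff]; tauto

private lemma aux_u2 : (X ∪ K) ∪ (Y ∪ insert e K) = insert e (X ∪ Y ∪ K) := by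
  ext x; simp only [Set.mem_union, Set.mem_insert_iff]; tauto

private lemma aux_s1 : (X ∩ Y) ∪ K ⊆ (X ∪ insert e K) ∩ (Y ∪ K) := by
  intro x hx
  simp only [Set.mem_union, Set.mem_inter_iff, Set.mem_insert_iff] at hx ⊢
  tauto

private lemma aux_s2 : (X ∩ Y) ∪ K ⊆ (X ∪ K) ∩ (Y ∪ insert e K) := by
  intro x hx
  simp only [Set.mem_union, Set.mem_inter_iff, Set.mem_insert_iff] at hx ⊢
  tauto

private lemma aux_d1 (heK : e ∉ K) : insert e X \ K = insert e (X \ insert e K) := by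
  ext x
  by_cases hx : x = e
  · subst hx; simp [heK]
  · simp only [Set.mem_insert_iff, Set.mem_diff, hx, false_or]

private lemma aux_d2 (heX : e ∉ X) :
    (X ∩ Y) \ K = (X \ insert e K) ∩ (Y \ insert e K) := by
  ext x
  by_cases hx : x = e
  · subst hx; simp [heX]
  · simp only [Set.mem_inter_iff, Set.mem_diff, Set.mem_insert_iff, hx, false_or]; tauto

private lemma aux_i1 : X \ {e} ∪ insert e K = X ∪ insert e K := by
  ext x
  simp only [Set.mem_union, Set.mem_diff, Set.mem_insert_iff, Set.mem_singleton_iff]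
  tauto

private lemma aux_i2 : (X \ {e}) \ insert e K = X \ insert e K := by
  ext x
  simp only [Set.mem_diff, Set.mem_insert_iff, Set.mem_singleton_iff]
  tauto

private lemma aux_e1 : insert e X ∪ K = X ∪ insert e K := by
  rw [Set.insert_union, Set.union_insert]

end auxsets

end Matroid

namespace Matroid

theorem cover_of_rkn (n : ℕ) :
    ∀ (M N : Matroid α) (KM KN : Set α), M.E = N.E → M.E.Finite →
    M.Indep KM → N.Indep KN →
    (∀ X, X ⊆ M.E → (X \ (KM ∪ KN)).ncard + M.rkn KM + N.rkn KN
        ≤ M.rkn (X ∪ KM) + N.rkn (X ∪ KN)) →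
    (M.E \ (KM ∪ KN)).ncard = n →
    ∃ I J, M.Indep I ∧ N.Indep J ∧ KM ⊆ I ∧ KN ⊆ J ∧ I ∪ J = M.E := by
  induction n with
  | zero =>
    intro M N KM KN hE hfin hKM hKN H hcard
    have hKME : KM ⊆ M.E := hKM.subset_ground
    have hKNE : KN ⊆ M.E := hE ▸ hKN.subset_ground
    have hempty : M.E \ (KM ∪ KN) = ∅ :=
      (Set.ncard_eq_zero (hfin.diff)).mp hcard
    have hcover : KM ∪ KN = M.E :=
      subset_antisymm (union_subset hKME hKNE) (diff_eq_empty.mp hempty)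
    exact ⟨KM, KN, hKM, hKN, subset_rfl, subset_rfl, hcover⟩
  | succ n IH =>
    intro M N KM KN hE hfin hKM hKN H hcard
    have hfinN : N.E.Finite := hE ▸ hfin
    have hKME : KM ⊆ M.E := hKM.subset_ground
    have hKNE : KN ⊆ M.E := hE ▸ hKN.subset_ground
    obtain ⟨e, heE, heK⟩ : ∃ e, e ∈ M.E ∧ e ∉ KM ∪ KN := by
      obtain ⟨e, he⟩ := Set.nonempty_of_ncard_ne_zero
        (show (M.E \ (KM ∪ KN)).ncard ≠ 0 by omega)
      exact ⟨e, he.1, he.2⟩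
    have hNground : e ∈ N.E := hE ▸ heE
    have hiu : insert e KM ∪ KN = insert e (KM ∪ KN) := insert_union
    have hiu' : KM ∪ insert e KN = insert e (KM ∪ KN) := union_insert
    have hcard' : (M.E \ insert e (KM ∪ KN)).ncard = n := by
      have h1 : M.E \ insert e (KM ∪ KN) = (M.E \ (KM ∪ KN)) \ {e} := by
        rw [diff_diff, union_singleton]
      rw [h1, Set.ncard_diff_singleton_of_mem (show e ∈ M.E \ (KM ∪ KN) from ⟨heE, heK⟩)]
      omega
    -- recursion helpers
    have recM : e ∉ M.closure KM →
        (∀ X, X ⊆ M.E → (X \ (insert e KM ∪ KN)).ncard + M.rkn (insert e KM) + N.rkn KN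
          ≤ M.rkn (X ∪ insert e KM) + N.rkn (X ∪ KN)) →
        ∃ I J, M.Indep I ∧ N.Indep J ∧ KM ⊆ I ∧ KN ⊆ J ∧ I ∪ J = M.E := by
      intro hecl HA
      have hind : M.Indep (insert e KM) := by
        rw [insert_indep_iff]
        exact ⟨hKM, fun _ => ⟨heE, hecl⟩⟩
      obtain ⟨I, J, h1, h2, h3, h4, h5⟩ :=
        IH M N (insert e KM) KN hE hfin hind hKN HA (by rw [hiu]; exact hcard')
      exact ⟨I, J, h1, h2, (subset_insert _ _).trans h3, h4, h5⟩
    have recN : e ∉ N.closure KN →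
        (∀ X, X ⊆ M.E → (X \ (KM ∪ insert e KN)).ncard + M.rkn KM + N.rkn (insert e KN)
          ≤ M.rkn (X ∪ KM) + N.rkn (X ∪ insert e KN)) →
        ∃ I J, M.Indep I ∧ N.Indep J ∧ KM ⊆ I ∧ KN ⊆ J ∧ I ∪ J = M.E := by
      intro hecl HB
      have hind : N.Indep (insert e KN) := by
        rw [insert_indep_iff]
        exact ⟨hKN, fun _ => ⟨hNground, hecl⟩⟩
      obtain ⟨J, I, h2, h1, h4, h3, h5⟩ :=
        IH N M (insert e KN) KM hE.symm hfinN hind hKM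
          (by
            intro X hX
            have hXM : X ⊆ M.E := hE ▸ hX
            have := HB X hXM
            rw [show insert e KN ∪ KM = KM ∪ insert e KN from union_comm _ _]
            omega)
          (by
            rw [show insert e KN ∪ KM = KM ∪ insert e KN from union_comm _ _, hiu', ← hE]
            exact hcard')
      exact ⟨I, J, h1, h2, h3, (subset_insert _ _).trans h4, by rw [union_comm, h5, ← hE]⟩
    -- e cannot be spanned on both sides
    have hone : ¬ (e ∈ M.closure KM ∧ e ∈ N.closure KN) := by
      rintro ⟨h1, h2⟩
      have hH := H {e} (singleton_subset_iff.mpr heE)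
      rw [singleton_union, singleton_union, rkn_insert_of_mem_closure h1,
        rkn_insert_of_mem_closure h2] at hH
      have hcd : ({e} \ (KM ∪ KN)).ncard = 1 := by
        have h3 : ({e} : Set α) \ (KM ∪ KN) = {e} := by
          ext x
          simp only [mem_diff, mem_singleton_iff]
          exact ⟨fun h => h.1, fun h => ⟨h, h ▸ heK⟩⟩
        rw [h3, Set.ncard_singleton]
      omega
    -- failure extraction (A-side)
    have failA :
        (¬ ∀ X, X ⊆ M.E → (X \ (insert e KM ∪ KN)).ncard + M.rkn (insert e KM) + N.rkn KN
          ≤ M.rkn (X ∪ insert e KM) + N.rkn (X ∪ KN)) →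
        ∃ X, X ⊆ M.E ∧ e ∉ X ∧
          M.rkn (X ∪ insert e KM) + N.rkn (X ∪ KN) <
            (X \ insert e (KM ∪ KN)).ncard + M.rkn (insert e KM) + N.rkn KN := by
      intro h
      push_neg at h
      obtain ⟨X, hXE, hlt⟩ := h
      rw [hiu] at hlt
      refine ⟨X \ {e}, diff_subset.trans hXE, fun h => h.2 rfl, ?_⟩
      have i1 : X \ {e} ∪ insert e KM = X ∪ insert e KM := aux_i1
      have i2 : (X \ {e}) \ insert e (KM ∪ KN) = X \ insert e (KM ∪ KN) := aux_i2
      have i3 : N.rkn (X \ {e} ∪ KN) ≤ N.rkn (X ∪ KN) :=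
        rkn_mono hfinN (union_subset_union_left _ diff_subset)
      rw [i1, i2]
      omega
    -- failure extraction (B-side)
    have failB :
        (¬ ∀ X, X ⊆ M.E → (X \ (KM ∪ insert e KN)).ncard + M.rkn KM + N.rkn (insert e KN)
          ≤ M.rkn (X ∪ KM) + N.rkn (X ∪ insert e KN)) →
        ∃ Y, Y ⊆ M.E ∧ e ∉ Y ∧
          M.rkn (Y ∪ KM) + N.rkn (Y ∪ insert e KN) <
            (Y \ insert e (KM ∪ KN)).ncard + M.rkn KM + N.rkn (insert e KN) := by
      intro h
      push_neg at h
      obtain ⟨Y, hYE, hlt⟩ := h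
      rw [hiu'] at hlt
      refine ⟨Y \ {e}, diff_subset.trans hYE, fun h => h.2 rfl, ?_⟩
      have i1 : Y \ {e} ∪ insert e KN = Y ∪ insert e KN := aux_i1
      have i2 : (Y \ {e}) \ insert e (KM ∪ KN) = Y \ insert e (KM ∪ KN) := aux_i2
      have i3 : M.rkn (Y \ {e} ∪ KM) ≤ M.rkn (Y ∪ KM) :=
        rkn_mono hfin (union_subset_union_left _ diff_subset)
      rw [i1, i2]
      omega
    by_cases hMcl : e ∈ M.closure KM
    · have hNcl : e ∉ N.closure KN := fun h => hone ⟨hMcl, h⟩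
      have NB : N.rkn (insert e KN) = N.rkn KN + 1 :=
        rkn_insert_of_not_mem_closure hfinN hNground hNcl
      by_cases hHB : ∀ X, X ⊆ M.E →
          (X \ (KM ∪ insert e KN)).ncard + M.rkn KM + N.rkn (insert e KN)
          ≤ M.rkn (X ∪ KM) + N.rkn (X ∪ insert e KN)
      · exact recN hNcl hHB
      · exfalso
        obtain ⟨Y, hYE, heY, hflt⟩ := failB hHB
        have hH := H (insert e Y) (insert_subset heE hYE)
        have u1 : insert e Y ∪ KM = insert e (Y ∪ KM) := insert_union
        have u2 : insert e Y ∪ KN = Y ∪ insert e KN := aux_e1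
        have u3 : (insert e Y \ (KM ∪ KN)).ncard = (Y \ insert e (KM ∪ KN)).ncard + 1 := by
          have d1 : insert e Y \ (KM ∪ KN) = insert e (Y \ insert e (KM ∪ KN)) := aux_d1 heK
          rw [d1, Set.ncard_insert_of_notMem (fun h => heY h.1)
            (((hfin.subset hYE).diff))]
        have u4 : M.rkn (insert e (Y ∪ KM)) = M.rkn (Y ∪ KM) :=
          rkn_insert_of_mem_closure (M.closure_subset_closure subset_union_right hMcl)
        rw [u1, u2, u3, u4] at hH
        omega
    · by_cases hHA : ∀ X, X ⊆ M.E →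
          (X \ (insert e KM ∪ KN)).ncard + M.rkn (insert e KM) + N.rkn KN
          ≤ M.rkn (X ∪ insert e KM) + N.rkn (X ∪ KN)
      · exact recM hMcl hHA
      · obtain ⟨X, hXE, heX, hfltA⟩ := failA hHA
        have MA : M.rkn (insert e KM) = M.rkn KM + 1 :=
          rkn_insert_of_not_mem_closure hfin heE hMcl
        -- derive e ∉ N.closure (X ∪ KN)
        have hH1 := H (insert e X) (insert_subset heE hXE)
        have e1 : insert e X ∪ KM = X ∪ insert e KM := aux_e1
        have e2 : insert e X ∪ KN = insert e (X ∪ KN) := insert_union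
        have e3 : (insert e X \ (KM ∪ KN)).ncard = (X \ insert e (KM ∪ KN)).ncard + 1 := by
          have d1 : insert e X \ (KM ∪ KN) = insert e (X \ insert e (KM ∪ KN)) := aux_d1 heK
          rw [d1, Set.ncard_insert_of_notMem (fun h => heX h.1)
            (((hfin.subset hXE).diff))]
        rw [e1, e2, e3] at hH1
        have hjump : N.rkn (X ∪ KN) + 1 ≤ N.rkn (insert e (X ∪ KN)) := by omega
        have hNclX : e ∉ N.closure (X ∪ KN) := fun h => by
          rw [rkn_insert_of_mem_closure h] at hjump; omega
        have hNcl : e ∉ N.closure KN :=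
          fun h => hNclX (N.closure_subset_closure subset_union_right h)
        have NB : N.rkn (insert e KN) = N.rkn KN + 1 :=
          rkn_insert_of_not_mem_closure hfinN hNground hNcl
        by_cases hHB : ∀ X, X ⊆ M.E →
            (X \ (KM ∪ insert e KN)).ncard + M.rkn KM + N.rkn (insert e KN)
            ≤ M.rkn (X ∪ KM) + N.rkn (X ∪ insert e KN)
        · exact recN hNcl hHB
        · exfalso
          obtain ⟨Y, hYE, heY, hfltB⟩ := failB hHB
          -- big submodularity contradiction
          have sM1 : (X ∪ insert e KM) ∪ (Y ∪ KM) = insert e (X ∪ Y ∪ KM) := aux_u1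
          have sM2 : (X ∩ Y) ∪ KM ⊆ (X ∪ insert e KM) ∩ (Y ∪ KM) := aux_s1
          have sN1 : (X ∪ KN) ∪ (Y ∪ insert e KN) = insert e (X ∪ Y ∪ KN) := aux_u2
          have sN2 : (X ∩ Y) ∪ KN ⊆ (X ∪ KN) ∩ (Y ∪ insert e KN) := aux_s2
          have subM : M.rkn (insert e (X ∪ Y ∪ KM)) + M.rkn ((X ∩ Y) ∪ KM)
              ≤ M.rkn (X ∪ insert e KM) + M.rkn (Y ∪ KM) := by
            have h1 := M.rkn_submod hfin (X ∪ insert e KM) (Y ∪ KM)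
            rw [sM1] at h1
            have h2 := rkn_mono (M := M) hfin sM2
            omega
          have subN : N.rkn (insert e (X ∪ Y ∪ KN)) + N.rkn ((X ∩ Y) ∪ KN)
              ≤ N.rkn (X ∪ KN) + N.rkn (Y ∪ insert e KN) := by
            have h1 := N.rkn_submod hfinN (X ∪ KN) (Y ∪ insert e KN)
            rw [sN1] at h1
            have h2 := rkn_mono (M := N) hfinN sN2
            omega
          have hHu := H (insert e (X ∪ Y)) (insert_subset heE (union_subset hXE hYE))
          have v1 : insert e (X ∪ Y) ∪ KM = insert e (X ∪ Y ∪ KM) := insert_union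
          have v2 : insert e (X ∪ Y) ∪ KN = insert e (X ∪ Y ∪ KN) := insert_union
          have v3 : (insert e (X ∪ Y) \ (KM ∪ KN)).ncard
              = ((X \ insert e (KM ∪ KN)) ∪ (Y \ insert e (KM ∪ KN))).ncard + 1 := by
            have d1 : insert e (X ∪ Y) \ (KM ∪ KN)
                = insert e ((X ∪ Y) \ insert e (KM ∪ KN)) := aux_d1 heK
            rw [d1, Set.union_diff_distrib, Set.ncard_insert_of_notMem
              (fun h => (by rcases h with h | h; exacts [heX h.1, heY h.1]))
              (((hfin.subset hXE).diff).union ((hfin.subset hYE).diff))]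
          rw [v1, v2, v3] at hHu
          have hHi := H (X ∩ Y) ((inter_subset_left).trans hXE)
          have w1 : (X ∩ Y) \ (KM ∪ KN)
              = (X \ insert e (KM ∪ KN)) ∩ (Y \ insert e (KM ∪ KN)) := aux_d2 heX
          rw [w1] at hHi
          have incl : ((X \ insert e (KM ∪ KN)) ∪ (Y \ insert e (KM ∪ KN))).ncard
              + ((X \ insert e (KM ∪ KN)) ∩ (Y \ insert e (KM ∪ KN))).ncard
              = (X \ insert e (KM ∪ KN)).ncard + (Y \ insert e (KM ∪ KN)).ncard :=
            Set.ncard_union_add_ncard_inter _ _ ((hfin.subset hXE).diff)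
              ((hfin.subset hYE).diff)
          omega

end Matroid

/-- Either there is a cohindrance focusing on `e`, or `e` is contained in a wave. -/
theorem cohindrance_or_wave (M N : Matroid α) (hE : M.E = N.E) (hfin : M.E.Finite)
    (e : α) (he : e ∈ M.E) :
    (∃ Y TM TN, IsWave M✶ N✶ Y TM TN ∧ e ∈ Y ∧ e ∉ TM ∧ e ∉ TN) ∨
    (∃ X SM SN, IsWave M N X SM SN ∧ e ∈ X) := by
  by_cases hw : ∃ X SM SN, IsWave M N X SM SN ∧ e ∈ X
  · exact Or.inr hw
  left
  have hfinN : N.E.Finite := hE ▸ hfin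
  classical
  set 𝒲 : Set (Set α) := {X | ∃ SM SN, IsWave M N X SM SN} with h𝒲
  have h𝒲fin : 𝒲.Finite :=
    hfin.finite_subsets.subset (fun X hX => by obtain ⟨SM, SN, h⟩ := hX; exact h.2.2.1)
  obtain ⟨TM0, TN0, hWave⟩ := isWave_sUnion hE 𝒲 h𝒲fin (fun X hX => hX)
  set W : Set α := ⋃₀ 𝒲 with hWdef
  have hWE : W ⊆ M.E := hWave.2.2.1
  have hWmax : ∀ X SM SN, IsWave M N X SM SN → X ⊆ W :=
    fun X SM SN h => subset_sUnion_of_mem ⟨SM, SN, h⟩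
  have heW : e ∉ W := by
    intro h
    rw [mem_sUnion] at h
    obtain ⟨X, hX, heX⟩ := h
    obtain ⟨SM, SN, hX'⟩ := hX
    exact hw ⟨X, SM, SN, hX', heX⟩
  set Y : Set α := M.E \ W with hYdef
  have heY : e ∈ Y := ⟨he, heW⟩
  have hYE : Y ⊆ M.E := diff_subset
  have hYfin : Y.Finite := hfin.diff
  have hWclM : W ⊆ M.closure TM0 := by
    have h := hWave.2.2.2.2.1
    rwa [Matroid.restrict_spanning_iff'' hWE hWave.1] at h
  have hWclN : W ⊆ N.closure TN0 := by
    have h := hWave.2.2.2.2.2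
    rwa [Matroid.restrict_spanning_iff'' (hE ▸ hWE) hWave.2.1] at h
  -- the key deficiency inequality beyond the maximum wave
  have hstar : ∀ Z, Z ⊆ Y → Z.Nonempty →
      Z.ncard + M.rkn W + N.rkn W + 1 ≤ M.rkn (W ∪ Z) + N.rkn (W ∪ Z) := by
    by_contra hcon
    push_neg at hcon
    obtain ⟨Z0, hZ0Y, hZ0ne, hZ0⟩ := hcon
    set T : Set (Set α) := {Z | Z ⊆ Y ∧ Z.Nonempty ∧
      M.rkn (W ∪ Z) + N.rkn (W ∪ Z) ≤ Z.ncard + M.rkn W + N.rkn W} with hT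
    have hTne : T.Nonempty := ⟨Z0, hZ0Y, hZ0ne, by omega⟩
    have hTfin : T.Finite := hYfin.finite_subsets.subset (fun Z hZ => hZ.1)
    obtain ⟨Z, hZT, hZmin⟩ := Set.exists_min_image T Set.ncard hTfin hTne
    obtain ⟨hZY, hZne, hZineq⟩ := hZT
    have hZE : Z ⊆ M.E := hZY.trans hYE
    have hZfin : Z.Finite := hfin.subset hZE
    have hZW : Disjoint Z W := disjoint_sdiff_left.mono_left hZY
    set R : Set α := W ∪ Z with hR
    have hRE : R ⊆ M.E := union_subset hWE hZE
    have hRfin : R.Finite := hfin.subset hRE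
    have hZR : Z ⊆ R := subset_union_right
    have hcompl : ∀ A, A ⊆ Z → R \ A = W ∪ (Z \ A) := by
      intro A hA
      ext x
      constructor
      · rintro ⟨hx1 | hx1, hx2⟩
        · exact Or.inl hx1
        · exact Or.inr ⟨hx1, hx2⟩
      · rintro (hx | ⟨hx1, hx2⟩)
        · exact ⟨Or.inl hx, fun hc => (disjoint_left.mp hZW (hA hc)) hx⟩
        · exact ⟨Or.inr hx1, hx2⟩
    have hkey : ∀ (P : Matroid α), P.E = M.E → ∀ A, A ⊆ Z →
        ((P ↾ R)✶ ↾ Z).rkn A + P.rkn R = A.ncard + P.rkn (W ∪ (Z \ A)) := by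
      intro P hPE A hA
      have h1 : ((P ↾ R)✶ ↾ Z).rkn A = ((P ↾ R)✶).rkn A := Matroid.rkn_restrict _ hA
      have h2 := Matroid.rkn_dual_add (M := P ↾ R)
        (by rw [restrict_ground_eq]; exact hRfin)
        (show A ⊆ (P ↾ R).E by rw [restrict_ground_eq]; exact hA.trans hZR)
      rw [restrict_ground_eq, Matroid.rkn_restrict _ subset_rfl,
        Matroid.rkn_restrict _ diff_subset, hcompl A hA] at h2
      rw [h1]
      exact h2
    have hcov : ∀ Ws, Ws ⊆ Z →
        Ws.ncard ≤ ((M ↾ R)✶ ↾ Z).rkn Ws + ((N ↾ R)✶ ↾ Z).rkn Ws := by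
      intro Ws hWs
      have hkM := hkey M rfl Ws hWs
      have hkN := hkey N hE.symm Ws hWs
      rcases eq_empty_or_nonempty Ws with h0 | hne
      · subst h0; simp
      have hcardZ : (Z \ Ws).ncard + Ws.ncard = Z.ncard :=
        Set.ncard_diff_add_ncard_of_subset hWs hZfin
      rcases eq_empty_or_nonempty (Z \ Ws) with hV0 | hVne
      · have hWsZ : Ws = Z := subset_antisymm hWs (by rwa [diff_eq_empty] at hV0)
        rw [hV0, union_empty] at hkM hkN
        have hcards : Ws.ncard = Z.ncard := by rw [hWsZ]
        omega
      · obtain ⟨w, hw⟩ := hne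
        have hVY : Z \ Ws ⊆ Y := diff_subset.trans hZY
        have hVlt : (Z \ Ws).ncard < Z.ncard :=
          Set.ncard_lt_ncard ((Set.ssubset_iff_of_subset diff_subset).mpr
            ⟨w, hWs hw, fun hV => hV.2 hw⟩) hZfin
        have hVnotT : ¬ (M.rkn (W ∪ (Z \ Ws)) + N.rkn (W ∪ (Z \ Ws))
            ≤ (Z \ Ws).ncard + M.rkn W + N.rkn W) := by
          intro hc
          have := hZmin (Z \ Ws) ⟨hVY, hVne, hc⟩
          omega
        omega
    obtain ⟨A, B, hA, hB, -, -, hAB⟩ :=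
      Matroid.cover_of_rkn ((((M ↾ R)✶ ↾ Z).E \ ((∅ : Set α) ∪ ∅)).ncard)
        ((M ↾ R)✶ ↾ Z) ((N ↾ R)✶ ↾ Z) ∅ ∅
        (by rw [restrict_ground_eq, restrict_ground_eq])
        (by rw [restrict_ground_eq]; exact hZfin)
        ((M ↾ R)✶ ↾ Z).empty_indep ((N ↾ R)✶ ↾ Z).empty_indep
        (by
          intro Xs hXs
          rw [restrict_ground_eq] at hXs
          simp only [union_empty, diff_empty, Matroid.rkn_empty, add_zero]
          exact hcov Xs hXs)
        rfl
    have hABZ : A ∪ B = Z := by rwa [restrict_ground_eq] at hAB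
    rw [restrict_indep_iff] at hA hB
    have hspanM : R ⊆ M.closure (W ∪ (Z \ A)) := by
      have hco : (M ↾ R).Coindep A := coindep_def.mpr hA.1
      have hsp := hco.compl_spanning
      rw [restrict_ground_eq, hcompl A hA.2] at hsp
      rwa [Matroid.restrict_spanning_iff'' hRE
        (union_subset subset_union_left ((diff_subset.trans hZR).trans subset_rfl))] at hsp
    have hspanN : R ⊆ N.closure (W ∪ (Z \ B)) := by
      have hco : (N ↾ R).Coindep B := coindep_def.mpr hB.1
      have hsp := hco.compl_spanning
      rw [restrict_ground_eq, hcompl B hB.2] at hsp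
      rwa [Matroid.restrict_spanning_iff'' (hE ▸ hRE)
        (union_subset subset_union_left ((diff_subset.trans hZR).trans subset_rfl))] at hsp
    have hsubME : TM0 ∪ (Z \ A) ⊆ M.E :=
      union_subset (hWave.1.trans hWE) ((diff_subset.trans hZE))
    have hsubNE : TN0 ∪ (Z \ B) ⊆ N.E := by
      rw [← hE]
      exact union_subset (hWave.2.1.trans hWE) ((diff_subset.trans hZE))
    have hwaveBig : IsWave M N (W ∪ Z) (TM0 ∪ (Z \ A)) (TN0 ∪ (Z \ B)) := by
      refine ⟨union_subset_union hWave.1 diff_subset,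
        union_subset_union hWave.2.1 diff_subset,
        union_subset hWE hZE, ?_, ?_, ?_⟩
      · rw [disjoint_union_left]
        constructor
        · rw [disjoint_union_right]
          exact ⟨hWave.2.2.2.1, hZW.symm.mono hWave.1 diff_subset⟩
        · rw [disjoint_union_right]
          refine ⟨hZW.mono diff_subset hWave.2.1, ?_⟩
          rw [disjoint_left]
          rintro x ⟨hxZ, hxA⟩ ⟨-, hxB⟩
          rw [← hABZ] at hxZ
          rcases hxZ with h | h
          exacts [hxA h, hxB h]
      · rw [Matroid.restrict_spanning_iff'' (union_subset hWE hZE)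
          (union_subset_union hWave.1 diff_subset)]
        have hsub : W ∪ (Z \ A) ⊆ M.closure (TM0 ∪ (Z \ A)) := by
          refine union_subset
            (hWclM.trans (M.closure_subset_closure subset_union_left)) ?_
          exact fun x hx => M.subset_closure _ hsubME (Or.inr hx)
        exact hspanM.trans (closure_subset_closure_of_subset_closure hsub)
      · rw [Matroid.restrict_spanning_iff'' (hE ▸ (union_subset hWE hZE))
          (union_subset_union hWave.2.1 diff_subset)]
        have hsub : W ∪ (Z \ B) ⊆ N.closure (TN0 ∪ (Z \ B)) := by
          refine union_subset
            (hWclN.trans (N.closure_subset_closure subset_union_left)) ?_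
          exact fun x hx => N.subset_closure _ hsubNE (Or.inr hx)
        exact hspanN.trans (closure_subset_closure_of_subset_closure hsub)
    have hZsubW : W ∪ Z ⊆ W := hWmax _ _ _ hwaveBig
    obtain ⟨z, hz⟩ := hZne
    exact (hZY hz).2 (hZsubW (Or.inr hz))
  -- final covering application to produce the cohindrance
  have hWeq : M.E \ Y = W := by rw [hYdef, diff_diff_cancel_left hWE]
  have hkey2 : ∀ (P : Matroid α), P.E = M.E → ∀ Zs, Zs ⊆ Y →
      ((P✶ ↾ Y)✶).rkn Zs + Y.ncard + P.rkn W
        = Zs.ncard + (Y \ Zs).ncard + P.rkn (W ∪ Zs) := by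
    intro P hPE Zs hZs
    have hYP : Y ⊆ P.E := by rw [hPE]; exact hYE
    have q1 := Matroid.rkn_dual_add (M := P✶ ↾ Y)
      (by rw [restrict_ground_eq]; exact hYfin)
      (show Zs ⊆ (P✶ ↾ Y).E by rw [restrict_ground_eq]; exact hZs)
    rw [restrict_ground_eq, Matroid.rkn_restrict _ subset_rfl,
      Matroid.rkn_restrict _ diff_subset] at q1
    have q2 := Matroid.rkn_dual_add (M := P) (by rw [hPE]; exact hfin) hYP
    have q3 := Matroid.rkn_dual_add (M := P) (by rw [hPE]; exact hfin)
      (show Y \ Zs ⊆ P.E from diff_subset.trans hYP)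
    have hid2 : P.E \ Y = W := by rw [hPE, hWeq]
    have hid : P.E \ (Y \ Zs) = W ∪ Zs := by
      rw [hPE, diff_diff_right, hWeq, inter_eq_self_of_subset_right (hZs.trans hYE)]
    rw [hid2] at q2
    rw [hid] at q3
    omega
  have hstar_e := hstar {e} (singleton_subset_iff.mpr heY) (singleton_nonempty e)
  have hins : W ∪ {e} = insert e W := union_singleton
  have hMle : M.rkn (W ∪ {e}) ≤ M.rkn W + 1 := by
    rw [hins]; exact Matroid.rkn_insert_le hfin
  have hNle : N.rkn (W ∪ {e}) ≤ N.rkn W + 1 := by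
    rw [hins]; exact Matroid.rkn_insert_le hfinN
  rw [Set.ncard_singleton] at hstar_e
  have hcardY : (Y \ {e}).ncard + 1 = Y.ncard :=
    Set.ncard_diff_singleton_add_one heY hYfin
  have hM1e : ((M✶ ↾ Y)✶).rkn {e} = 1 := by
    have h := hkey2 M rfl {e} (singleton_subset_iff.mpr heY)
    rw [Set.ncard_singleton] at h
    omega
  have hN1e : ((N✶ ↾ Y)✶).rkn {e} = 1 := by
    have h := hkey2 N hE.symm {e} (singleton_subset_iff.mpr heY)
    rw [Set.ncard_singleton] at h
    omega
  obtain ⟨A, B, hA, hB, heA, heB, hAB⟩ :=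
    Matroid.cover_of_rkn ((((M✶ ↾ Y)✶).E \ ({e} ∪ {e})).ncard)
      ((M✶ ↾ Y)✶) ((N✶ ↾ Y)✶) {e} {e}
      (by rw [dual_ground, restrict_ground_eq, dual_ground, restrict_ground_eq])
      (by rw [dual_ground, restrict_ground_eq]; exact hYfin)
      (Matroid.indep_singleton_of_rkn hM1e) (Matroid.indep_singleton_of_rkn hN1e)
      (by
        intro Xs hXs
        rw [dual_ground, restrict_ground_eq] at hXs
        have hZs : insert e Xs ⊆ Y := insert_subset heY hXs
        have hst := hstar (insert e Xs) hZs (insert_nonempty _ _)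
        have hkM := hkey2 M rfl (insert e Xs) hZs
        have hkN := hkey2 N hE.symm (insert e Xs) hZs
        have hU : Xs ∪ {e} = insert e Xs := union_singleton
        have hS : ({e} : Set α) ∪ {e} = {e} := union_self _
        have hcardins : (insert e Xs).ncard = (Xs \ {e}).ncard + 1 := by
          have h1 : insert e Xs = insert e (Xs \ {e}) := by
            rw [Set.insert_diff_singleton]
          rw [h1, Set.ncard_insert_of_notMem
            (show e ∉ Xs \ {e} from fun h => h.2 rfl)
            ((hYfin.subset hXs).diff)]
        have hcardYZ : (Y \ insert e Xs).ncard + (insert e Xs).ncard = Y.ncard :=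
          Set.ncard_diff_add_ncard_of_subset hZs hYfin
        rw [hU, hS, hM1e, hN1e]
        omega)
      rfl
  have hABY : A ∪ B = Y := by rwa [dual_ground, restrict_ground_eq] at hAB
  refine ⟨Y, Y \ A, Y \ B, ⟨diff_subset, diff_subset, ?_, ?_, ?_, ?_⟩, heY, ?_, ?_⟩
  · rw [dual_ground]; exact hYE
  · rw [disjoint_left]
    rintro x ⟨hxY, hxA⟩ ⟨-, hxB⟩
    rw [← hABY] at hxY
    rcases hxY with h | h
    exacts [hxA h, hxB h]
  · have hco : (M✶ ↾ Y).Coindep A := coindep_def.mpr hA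
    have hsp := hco.compl_spanning
    rwa [restrict_ground_eq] at hsp
  · have hco : (N✶ ↾ Y).Coindep B := coindep_def.mpr hB
    have hsp := hco.compl_spanning
    rwa [restrict_ground_eq] at hsp
  · exact fun h => h.2 (heA rfl)
  · exact fun h => h.2 (heB rfl)
end

section
/- Let M and N be matroids on a common finite ground set E and e ∈ E. It cannot happen that both: (a) there is a wave (W, S^M, S^N) for (M, N) with e ∉ W such that e lies in the M-span of W, and (b) there is a cowave (X, T^M, T^N) for (M, N) with e ∈ T^N. (That is, the promises M_+ and M_-^* cannot both be attainable in the same arena.) -/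
open Matroid Set

variable {α : Type*}

/-- If `X` is spanned (in the restriction) by `S`, then `X` lies in the closure of `S`. -/
lemma subset_closure_of_restrict_spanning {M : Matroid α} {X S : Set α}
    (hX : X ⊆ M.E) (hsp : (M ↾ X).Spanning S) : X ⊆ M.closure S := by
  obtain ⟨B, hB, hBS⟩ := hsp.exists_isBase_subset
  rw [isBase_restrict_iff'] at hB
  have hB' : M.IsBasis B X := hB.isBasis hX
  calc X ⊆ M.closure X := M.subset_closure X hX
    _ = M.closure B := hB'.closure_eq_closure.symm
    _ ⊆ M.closure S := M.closure_subset_closure hBS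

/-- The key counting lemma.  If `T` is spanning in `M✶ ↾ X`, then any subset `K` of
`X \ T` that lies in the closure of `P ∪ (M.E \ X)` satisfies `|K| ≤ |P|`. -/
lemma encard_le_of_spanning_dual_restrict {M : Matroid α} {X T P K : Set α}
    (hfin : M.E.Finite) (hX : X ⊆ M.E) (hsp : (M✶ ↾ X).Spanning T)
    (hP : P ⊆ M.E) (hKX : K ⊆ X \ T) (hKcl : K ⊆ M.closure (P ∪ (M.E \ X))) :
    K.encard ≤ P.encard := by
  obtain ⟨B, hB, hBT⟩ := hsp.exists_isBase_subset
  rw [isBase_restrict_iff'] at hB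
  have hBX : M✶.IsBasis B X := hB.isBasis (show X ⊆ M✶.E from hX)
  obtain ⟨B', hB', hBeq⟩ := hBX.exists_isBase
  have hMB : M.IsBase (M.E \ B') := hB'.compl_isBase_of_dual
  -- the complementary basis of `M.E \ X`
  have hJ : M.IsBasis ((M.E \ B') ∩ (M.E \ X)) (M.E \ X) := by
    have h1 : M✶.IsBasis (B' ∩ X) X := by rw [← hBeq]; exact hBX
    have := hB'.compl_inter_isBasis_of_inter_isBasis h1
    rwa [dual_dual] at this
  set Y : Set α := M.E \ X with hYdef
  set J : Set α := (M.E \ B') ∩ (M.E \ X) with hJdef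
  have hJY : J ⊆ Y := inter_subset_right
  have hKB' : K ⊆ M.E \ B' := by
    intro x hx
    refine ⟨hX (hKX hx).1, fun hxB' => (hKX hx).2 (hBT ?_)⟩
    rw [hBeq]; exact ⟨hxB', (hKX hx).1⟩
  have hKJindep : M.Indep (K ∪ J) := hMB.indep.subset (union_subset hKB' inter_subset_left)
  have hdisjKJ : Disjoint K J :=
    (disjoint_sdiff_right (s := X)).mono (fun x hx => (hKX hx).1) hJY
  -- closure of `P ∪ Y` equals closure of `P ∪ J`
  have hclY : M.closure (P ∪ Y) = M.closure (P ∪ J) := by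
    calc M.closure (P ∪ Y) = M.closure (P ∪ M.closure Y) :=
          (M.closure_union_closure_right_eq P Y).symm
      _ = M.closure (P ∪ M.closure J) := by rw [hJ.closure_eq_closure]
      _ = M.closure (P ∪ J) := M.closure_union_closure_right_eq P J
  obtain ⟨B₁, hB₁, hJB₁⟩ := hJ.indep.subset_isBasis_of_subset
    (subset_union_right (s := P)) (union_subset hP hJ.indep.subset_ground)
  have hKJcl : K ∪ J ⊆ M.closure (P ∪ J) := by
    refine union_subset ?_ ?_
    · exact fun x hx => hclY ▸ (hKcl hx)
    · exact (subset_union_right (s := P)).trans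
        (M.subset_closure (P ∪ J) (union_subset hP hJ.indep.subset_ground))
  have hB₁c : M.IsBasis B₁ (M.closure (P ∪ J)) := hB₁.isBasis_closure_right
  obtain ⟨B₂, hB₂, hKJB₂⟩ := hKJindep.subset_isBasis_of_subset hKJcl
    (M.closure_subset_ground (P ∪ J))
  have h1 : (K ∪ J).encard ≤ B₂.encard := encard_mono hKJB₂
  have h2 : B₂.encard = B₁.encard := hB₂.encard_eq_encard hB₁c
  have h3 : B₁.encard ≤ P.encard + J.encard :=
    (encard_mono hB₁.subset).trans (encard_union_le P J)
  have h4 : (K ∪ J).encard = K.encard + J.encard := encard_union_eq hdisjKJ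
  have h5 : K.encard + J.encard ≤ P.encard + J.encard := by
    rw [← h4]; exact h1.trans (h2 ▸ h3)
  have hJfin : J.encard ≠ ⊤ := (hfin.subset hJ.indep.subset_ground).encard_lt_top.ne
  exact (WithTop.add_le_add_iff_right hJfin).mp h5

/-- The promises `M₊` and `M₋^*` cannot both be attainable in the same arena. -/
theorem not_both_Mplus_Mminus_star (M N : Matroid α) (hE : M.E = N.E) (hfin : M.E.Finite)
    (e : α) (he : e ∈ M.E) :
    ¬ ((∃ W SM SN, IsWave M N W SM SN ∧ e ∉ W ∧ e ∈ M.closure W) ∧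
       (∃ X TM TN, IsWave M✶ N✶ X TM TN ∧ e ∈ TN)) := by
  rintro ⟨⟨W, SM, SN, ⟨hSMW, hSNW, hWE, hdis, hspM, hspN⟩, heW, hecl⟩,
          ⟨X, TM, TN, ⟨hTMX, hTNX, hXE, hdisT, hspTM, hspTN⟩, heTN⟩⟩
  have hXE' : X ⊆ M.E := hXE
  have hWNE : W ⊆ N.E := hE ▸ hWE
  have hWclM : W ⊆ M.closure SM := subset_closure_of_restrict_spanning hWE hspM
  have hWclN : W ⊆ N.closure SN := subset_closure_of_restrict_spanning hWNE hspN
  have heM : e ∈ M.closure SM :=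
    M.closure_closure SM ▸ (M.closure_subset_closure hWclM) hecl
  set U : Set α := (SM ∪ SN) ∩ X with hUdef
  set P : Set α := SM ∩ X with hPdef
  set Q : Set α := SN ∩ X with hQdef
  have hUPQ : U = P ∪ Q := by rw [hUdef, hPdef, hQdef, union_inter_distrib_right]
  have heU : e ∉ U := fun h => heW (h.1.elim (fun h' => hSMW h') (fun h' => hSNW h'))
  have heX : e ∈ X := hTNX heTN
  have heTM : e ∉ TM := fun h => (hdisT.ne_of_mem h heTN) rfl
  -- the M-side application
  have hMside : ((U \ TM) ∪ {e}).encard ≤ P.encard := by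
    refine encard_le_of_spanning_dual_restrict hfin hXE' hspTM
      (inter_subset_left.trans (hSMW.trans hWE)) ?_ ?_
    · refine union_subset (fun x hx => ⟨hx.1.2, hx.2⟩) ?_
      rintro x rfl; exact ⟨heX, heTM⟩
    · have hsub : M.closure SM ⊆ M.closure (P ∪ (M.E \ X)) := by
        refine M.closure_subset_closure fun x hx => ?_
        by_cases hxX : x ∈ X
        · exact Or.inl ⟨hx, hxX⟩
        · exact Or.inr ⟨hWE (hSMW hx), hxX⟩
      refine union_subset ?_ ?_
      · exact fun x hx => hsub (hWclM (hx.1.1.elim (fun h' => hSMW h') (fun h' => hSNW h')))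
      · rintro x rfl; exact hsub heM
  -- the N-side application
  have hNE : N.E.Finite := hE ▸ hfin
  have hNside : (U ∩ TM).encard ≤ Q.encard := by
    refine encard_le_of_spanning_dual_restrict hNE (show X ⊆ N.E from hE ▸ hXE') hspTN
      (inter_subset_left.trans (hSNW.trans hWNE)) ?_ ?_
    · exact fun x hx => ⟨hx.1.2, fun hxTN => (hdisT.ne_of_mem hx.2 hxTN) rfl⟩
    · have hsub : N.closure SN ⊆ N.closure (Q ∪ (N.E \ X)) := by
        refine N.closure_subset_closure fun x hx => ?_
        by_cases hxX : x ∈ X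
        · exact Or.inl ⟨hx, hxX⟩
        · exact Or.inr ⟨hWNE (hSNW hx), hxX⟩
      exact fun x hx => hsub (hWclN (hx.1.1.elim (fun h' => hSMW h') (fun h' => hSNW h')))
  -- cardinality bookkeeping
  have hUfin : U.Finite := hfin.subset (inter_subset_right.trans hXE')
  have hUsplit : (U \ TM).encard + (U ∩ TM).encard = U.encard :=
    encard_diff_add_encard_inter U TM
  have hPQ : P.encard + Q.encard = U.encard := by
    rw [hUPQ]
    exact (encard_union_eq (hdis.mono inter_subset_left inter_subset_left)).symm
  have heUD : e ∉ U \ TM := fun h => heU h.1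
  have hKMcard : ((U \ TM) ∪ {e}).encard = (U \ TM).encard + 1 := by
    rw [union_singleton, encard_insert_of_notMem heUD]
  have hfinal : U.encard + 1 ≤ U.encard := by
    calc U.encard + 1 = ((U \ TM).encard + 1) + (U ∩ TM).encard := by
          rw [← hUsplit]; ring
      _ ≤ P.encard + Q.encard := add_le_add (hKMcard ▸ hMside) hNside
      _ = U.encard := hPQ
  exact absurd ((ENat.add_one_le_iff hUfin.encard_lt_top.ne).mp hfinal) (lt_irrefl _)
end

section
/- Let M and N be matroids on a common finite ground set E and e ∈ E. Then at least one of the following holds: (a) there is a wave (W, S^M, S^N) for (M, N) with e ∉ W such that e lies in the M-closure of W; or (b) there is a cowave (X, T^M, T^N) for (M, N) with e ∈ T^N. -/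
open Matroid Set

variable {α : Type*}

/-- An abstract (finite, integer-valued) rank function on subsets of a ground set `E`. -/
def IsRkFn (E : Set α) (r : Set α → ℕ) : Prop :=
  r ∅ = 0 ∧
  (∀ ⦃A B : Set α⦄, A ⊆ B → B ⊆ E → r A ≤ r B) ∧
  (∀ ⦃x : α⦄ ⦃A : Set α⦄, x ∈ E → A ⊆ E → r (insert x A) ≤ r A + 1) ∧
  (∀ ⦃A B : Set α⦄, A ⊆ E → B ⊆ E → r (A ∪ B) + r (A ∩ B) ≤ r A + r B)

namespace IsRkFn

variable {E F : Set α} {r : Set α → ℕ}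

lemma empty (h : IsRkFn E r) : r ∅ = 0 := h.1
lemma mono (h : IsRkFn E r) {A B : Set α} (hAB : A ⊆ B) (hB : B ⊆ E) : r A ≤ r B :=
  h.2.1 hAB hB
lemma step (h : IsRkFn E r) {x : α} {A : Set α} (hx : x ∈ E) (hA : A ⊆ E) :
    r (insert x A) ≤ r A + 1 := h.2.2.1 hx hA
lemma submod (h : IsRkFn E r) {A B : Set α} (hA : A ⊆ E) (hB : B ⊆ E) :
    r (A ∪ B) + r (A ∩ B) ≤ r A + r B := h.2.2.2 hA hB

lemma subset (h : IsRkFn E r) (hFE : F ⊆ E) : IsRkFn F r :=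
  ⟨h.1, fun _ _ hAB hB => h.mono hAB (hB.trans hFE),
    fun _ _ hx hA => h.step (hFE hx) (hA.trans hFE),
    fun _ _ hA hB => h.submod (hA.trans hFE) (hB.trans hFE)⟩

lemma diff_le_aux (h : IsRkFn E r) (hE : E.Finite) :
    ∀ (n : ℕ) (A B : Set α), A ⊆ B → B ⊆ E → (B \ A).ncard ≤ n →
      r B ≤ r A + (B \ A).ncard := by
  intro n
  induction n with
  | zero =>
    intro A B hAB hBE hn
    have hfin : (B \ A).Finite := (hE.subset hBE).diff
    have : B \ A = ∅ := by
      rw [← ncard_eq_zero hfin]; omega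
    have : B = A := subset_antisymm (fun x hx => by
      by_contra hxa
      exact (by simp [this] : x ∉ B \ A) ⟨hx, hxa⟩) hAB
    simp [this]
  | succ n ih =>
    intro A B hAB hBE hn
    rcases (B \ A).eq_empty_or_nonempty with hem | ⟨x, hx⟩
    · have : B = A := subset_antisymm (fun y hy => by
        by_contra hya
        exact (by simp [hem] : y ∉ B \ A) ⟨hy, hya⟩) hAB
      simp [this]
    · have hxB : x ∈ B := hx.1
      have hxA : x ∉ A := hx.2
      have hfinB : B.Finite := hE.subset hBE
      have hB' : B = insert x (B \ {x}) := by
        rw [insert_diff_singleton, insert_eq_of_mem hxB]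
      have h1 : r B ≤ r (B \ {x}) + 1 := by
        nth_rewrite 1 [hB']
        exact h.step (hBE hxB) (diff_subset.trans hBE)
      have hsub : A ⊆ B \ {x} := fun y hy => ⟨hAB hy, fun hyx => hxA (hyx ▸ hy)⟩
      have hset : (B \ {x}) \ A = (B \ A) \ {x} := by
        ext y; simp; tauto
      have hcard : ((B \ A) \ {x}).ncard = (B \ A).ncard - 1 := by
        rw [ncard_diff_singleton_of_mem hx]
      have h2 := ih A (B \ {x}) hsub (diff_subset.trans hBE) (by rw [hset, hcard]; omega)
      rw [hset, hcard] at h2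
      have hpos : 1 ≤ (B \ A).ncard :=
        (ncard_pos (hfinB.diff)).mpr ⟨x, hx⟩
      omega

lemma diff_le (h : IsRkFn E r) (hE : E.Finite) {A B : Set α} (hAB : A ⊆ B) (hBE : B ⊆ E) :
    r B ≤ r A + (B \ A).ncard :=
  h.diff_le_aux hE _ A B hAB hBE le_rfl

lemma loop_absorb (h : IsRkFn E r) {x : α} {A : Set α} (hx : x ∈ E) (hA : A ⊆ E)
    (hx0 : r {x} = 0) : r (insert x A) ≤ r A := by
  have := h.submod hA (singleton_subset_iff.mpr hx)
  rw [union_singleton, hx0] at this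
  omega

lemma closure_step (h : IsRkFn E r) {x : α} {Z U : Set α} (hZU : Z ⊆ U) (hU : U ⊆ E)
    (hx : x ∈ E) (hxU : x ∉ U) (hr : r (insert x Z) ≤ r Z) : r (insert x U) ≤ r U := by
  have hsub := h.submod hU (insert_subset hx (hZU.trans hU))
  have h1 : U ∪ insert x Z = insert x U := by
    ext y; simp; tauto
  have h2 : U ∩ insert x Z = Z := by
    ext y; simp
    constructor
    · rintro ⟨hyU, rfl | hyZ⟩
      · exact absurd hyU hxU
      · exact hyZ
    · exact fun hyZ => ⟨hZU hyZ, Or.inr hyZ⟩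
  rw [h1, h2] at hsub
  omega

lemma contract (h : IsRkFn E r) {x : α} (hx : x ∈ E) (hx1 : r {x} = 1) :
    IsRkFn (E \ {x}) (fun Z => r (insert x Z) - 1) := by
  have hone : ∀ A : Set α, A ⊆ E → 1 ≤ r (insert x A) := by
    intro A hA
    have : r {x} ≤ r (insert x A) := h.mono (by simp) (insert_subset hx hA)
    omega
  refine ⟨?_, ?_, ?_, ?_⟩
  · simp only [insert_empty_eq, hx1]
  · intro A B hAB hB
    have hBE : B ⊆ E := hB.trans diff_subset
    have := h.mono (insert_subset_insert hAB) (insert_subset hx hBE)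
    show r (insert x A) - 1 ≤ r (insert x B) - 1
    omega
  · intro y A hy hA
    have hAE : A ⊆ E := hA.trans diff_subset
    have h1 : r (insert y (insert x A)) ≤ r (insert x A) + 1 :=
      h.step (diff_subset hy) (insert_subset hx hAE)
    rw [Set.insert_comm] at h1
    have h2 := hone A hAE
    show r (insert x (insert y A)) - 1 ≤ r (insert x A) - 1 + 1
    omega
  · intro A B hA hB
    have hAE : A ⊆ E := hA.trans diff_subset
    have hBE : B ⊆ E := hB.trans diff_subset
    have hsub := h.submod (insert_subset hx hAE) (insert_subset hx hBE)
    have e1 : insert x A ∪ insert x B = insert x (A ∪ B) := by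
      ext y; simp; tauto
    have e2 : insert x A ∩ insert x B = insert x (A ∩ B) := by
      ext y; simp; tauto
    rw [e1, e2] at hsub
    have h1 := hone A hAE
    have h2 := hone B hBE
    have h3 := hone (A ∪ B) (union_subset hAE hBE)
    have h4 := hone (A ∩ B) (inter_subset_left.trans hAE)
    show r (insert x (A ∪ B)) - 1 + (r (insert x (A ∩ B)) - 1) ≤
      (r (insert x A) - 1) + (r (insert x B) - 1)
    omega

theorem cov :
    ∀ (n : ℕ) (E : Set α) (r₁ r₂ : Set α → ℕ), E.Finite → E.ncard ≤ n →
      IsRkFn E r₁ → IsRkFn E r₂ → (∀ Z ⊆ E, Z.ncard ≤ r₁ Z + r₂ Z) →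
      ∃ I J, I ⊆ E ∧ J ⊆ E ∧ I ∪ J = E ∧ r₁ I = I.ncard ∧ r₂ J = J.ncard := by
  intro n
  induction n with
  | zero =>
    intro E r₁ r₂ hE hn h₁ h₂ _
    have hEe : E = ∅ := by rw [← ncard_eq_zero hE]; omega
    exact ⟨∅, ∅, by simp [hEe], by simp [hEe], by simp [hEe], by simp [h₁.empty],
      by simp [h₂.empty]⟩
  | succ n ih =>
    intro E r₁ r₂ hE hn h₁ h₂ hc
    rcases E.eq_empty_or_nonempty with hEe | ⟨x, hxE⟩
    · exact ⟨∅, ∅, by simp [hEe], by simp [hEe], by simp [hEe], by simp [h₁.empty],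
        by simp [h₂.empty]⟩
    have hE' : (E \ {x}).Finite := hE.diff
    have hn' : (E \ {x}).ncard ≤ n := by
      have h1 : (E \ {x}).ncard = E.ncard - 1 := ncard_diff_singleton_of_mem hxE
      have h2 : 1 ≤ E.ncard := (ncard_pos hE).mpr ⟨x, hxE⟩
      omega
    have hxS : ({x} : Set α) ⊆ E := singleton_subset_iff.mpr hxE
    have hr1le : r₁ {x} ≤ 1 := by
      have := h₁.step hxE (empty_subset E)
      simpa [h₁.empty] using this
    have hr2le : r₂ {x} ≤ 1 := by
      have := h₂.step hxE (empty_subset E)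
      simpa [h₂.empty] using this
    have hsum : 1 ≤ r₁ {x} + r₂ {x} := by simpa using hc {x} hxS
    by_cases h10 : r₁ {x} = 0
    · -- x is a loop for r₁; it must go to the J side
      have h2x : r₂ {x} = 1 := by omega
      have hc' : ∀ Z ⊆ E \ {x}, Z.ncard ≤ r₁ Z + (fun Z => r₂ (insert x Z) - 1) Z := by
        intro Z hZ
        have hZE : Z ⊆ E := hZ.trans diff_subset
        have hxZ : x ∉ Z := fun h => (hZ h).2 rfl
        have hcz := hc (insert x Z) (insert_subset hxE hZE)
        have hcard : (insert x Z).ncard = Z.ncard + 1 :=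
          ncard_insert_of_notMem hxZ (hE.subset hZE)
        have habs : r₁ (insert x Z) ≤ r₁ Z := h₁.loop_absorb hxE hZE h10
        have hmono : 1 ≤ r₂ (insert x Z) := by
          have := h₂.mono (singleton_subset_iff.mpr (mem_insert x Z))
            (insert_subset hxE hZE)
          omega
        have hmono2 : r₁ Z ≤ r₁ (insert x Z) :=
          h₁.mono (subset_insert x Z) (insert_subset hxE hZE)
        show Z.ncard ≤ r₁ Z + (r₂ (insert x Z) - 1)
        omega
      obtain ⟨I, J, hIE, hJE, hIJ, hI, hJ⟩ :=
        ih (E \ {x}) r₁ _ hE' hn' (h₁.subset diff_subset) (h₂.contract hxE h2x) hc'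
      have hJ' : r₂ (insert x J) - 1 = J.ncard := hJ
      have hxJ : x ∉ J := fun h => (hJE h).2 rfl
      refine ⟨I, insert x J, hIE.trans diff_subset,
        insert_subset hxE (hJE.trans diff_subset), ?_, hI, ?_⟩
      · rw [union_insert, hIJ, insert_diff_singleton, insert_eq_of_mem hxE]
      · have hge : 1 ≤ r₂ (insert x J) := by
          have := h₂.mono (singleton_subset_iff.mpr (mem_insert x J))
            (insert_subset hxE (hJE.trans diff_subset))
          omega
        rw [ncard_insert_of_notMem hxJ (hE.subset (hJE.trans diff_subset))]
        omega
    by_cases h20 : r₂ {x} = 0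
    · -- x is a loop for r₂; it must go to the I side
      have h1x : r₁ {x} = 1 := by omega
      have hc' : ∀ Z ⊆ E \ {x}, Z.ncard ≤ (fun Z => r₁ (insert x Z) - 1) Z + r₂ Z := by
        intro Z hZ
        have hZE : Z ⊆ E := hZ.trans diff_subset
        have hxZ : x ∉ Z := fun h => (hZ h).2 rfl
        have hcz := hc (insert x Z) (insert_subset hxE hZE)
        have hcard : (insert x Z).ncard = Z.ncard + 1 :=
          ncard_insert_of_notMem hxZ (hE.subset hZE)
        have habs : r₂ (insert x Z) ≤ r₂ Z := h₂.loop_absorb hxE hZE h20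
        have hmono : 1 ≤ r₁ (insert x Z) := by
          have := h₁.mono (singleton_subset_iff.mpr (mem_insert x Z))
            (insert_subset hxE hZE)
          omega
        have hmono2 : r₂ Z ≤ r₂ (insert x Z) :=
          h₂.mono (subset_insert x Z) (insert_subset hxE hZE)
        show Z.ncard ≤ (r₁ (insert x Z) - 1) + r₂ Z
        omega
      obtain ⟨I, J, hIE, hJE, hIJ, hI, hJ⟩ :=
        ih (E \ {x}) _ r₂ hE' hn' (h₁.contract hxE h1x) (h₂.subset diff_subset) hc'
      have hI' : r₁ (insert x I) - 1 = I.ncard := hI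
      have hxI : x ∉ I := fun h => (hIE h).2 rfl
      refine ⟨insert x I, J, insert_subset hxE (hIE.trans diff_subset),
        hJE.trans diff_subset, ?_, ?_, hJ⟩
      · rw [insert_union, hIJ, insert_diff_singleton, insert_eq_of_mem hxE]
      · have hge : 1 ≤ r₁ (insert x I) := by
          have := h₁.mono (singleton_subset_iff.mpr (mem_insert x I))
            (insert_subset hxE (hIE.trans diff_subset))
          omega
        rw [ncard_insert_of_notMem hxI (hE.subset (hIE.trans diff_subset))]
        omega
    -- now r₁ {x} = 1 and r₂ {x} = 1
    have h1x : r₁ {x} = 1 := by omega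
    have h2x : r₂ {x} = 1 := by omega
    by_cases hy1 : ∀ Z ⊆ E \ {x}, Z.ncard ≤ (r₁ (insert x Z) - 1) + r₂ Z
    · obtain ⟨I, J, hIE, hJE, hIJ, hI, hJ⟩ :=
        ih (E \ {x}) _ r₂ hE' hn' (h₁.contract hxE h1x) (h₂.subset diff_subset) hy1
      have hI' : r₁ (insert x I) - 1 = I.ncard := hI
      have hxI : x ∉ I := fun h => (hIE h).2 rfl
      refine ⟨insert x I, J, insert_subset hxE (hIE.trans diff_subset),
        hJE.trans diff_subset, ?_, ?_, hJ⟩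
      · rw [insert_union, hIJ, insert_diff_singleton, insert_eq_of_mem hxE]
      · have hge : 1 ≤ r₁ (insert x I) := by
          have := h₁.mono (singleton_subset_iff.mpr (mem_insert x I))
            (insert_subset hxE (hIE.trans diff_subset))
          omega
        rw [ncard_insert_of_notMem hxI (hE.subset (hIE.trans diff_subset))]
        omega
    by_cases hy2 : ∀ Z ⊆ E \ {x}, Z.ncard ≤ r₁ Z + (r₂ (insert x Z) - 1)
    · obtain ⟨I, J, hIE, hJE, hIJ, hI, hJ⟩ :=
        ih (E \ {x}) r₁ _ hE' hn' (h₁.subset diff_subset) (h₂.contract hxE h2x) hy2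
      have hJ' : r₂ (insert x J) - 1 = J.ncard := hJ
      have hxJ : x ∉ J := fun h => (hJE h).2 rfl
      refine ⟨I, insert x J, hIE.trans diff_subset,
        insert_subset hxE (hJE.trans diff_subset), ?_, hI, ?_⟩
      · rw [union_insert, hIJ, insert_diff_singleton, insert_eq_of_mem hxE]
      · have hge : 1 ≤ r₂ (insert x J) := by
          have := h₂.mono (singleton_subset_iff.mpr (mem_insert x J))
            (insert_subset hxE (hJE.trans diff_subset))
          omega
        rw [ncard_insert_of_notMem hxJ (hE.subset (hJE.trans diff_subset))]
        omega
    -- both attempts fail: derive a contradiction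
    exfalso
    push_neg at hy1 hy2
    obtain ⟨Z₁, hZ₁, hv₁⟩ := hy1
    obtain ⟨Z₂, hZ₂, hv₂⟩ := hy2
    have hZ₁E : Z₁ ⊆ E := hZ₁.trans diff_subset
    have hZ₂E : Z₂ ⊆ E := hZ₂.trans diff_subset
    have hone₁ : 1 ≤ r₁ (insert x Z₁) := by
      have := h₁.mono (singleton_subset_iff.mpr (mem_insert x Z₁))
        (insert_subset hxE hZ₁E)
      omega
    have hone₂ : 1 ≤ r₂ (insert x Z₂) := by
      have := h₂.mono (singleton_subset_iff.mpr (mem_insert x Z₂))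
        (insert_subset hxE hZ₂E)
      omega
    have hmono₁ : r₁ Z₁ ≤ r₁ (insert x Z₁) :=
      h₁.mono (subset_insert x Z₁) (insert_subset hxE hZ₁E)
    have hmono₂ : r₂ Z₂ ≤ r₂ (insert x Z₂) :=
      h₂.mono (subset_insert x Z₂) (insert_subset hxE hZ₂E)
    have hcZ₁ := hc Z₁ hZ₁E
    have hcZ₂ := hc Z₂ hZ₂E
    have e₁ : r₁ (insert x Z₁) ≤ r₁ Z₁ := by omega
    have e₂ : r₂ (insert x Z₂) ≤ r₂ Z₂ := by omega
    set U := Z₁ ∪ Z₂ with hU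
    have hUE' : U ⊆ E \ {x} := union_subset hZ₁ hZ₂
    have hUE : U ⊆ E := hUE'.trans diff_subset
    have hxU : x ∉ U := fun h => (hUE' h).2 rfl
    have f₁ : r₁ (insert x U) ≤ r₁ U :=
      h₁.closure_step subset_union_left hUE hxE hxU e₁
    have f₂ : r₂ (insert x U) ≤ r₂ U :=
      h₂.closure_step subset_union_right hUE hxE hxU e₂
    have s₁ := h₁.submod hZ₁E hZ₂E
    have s₂ := h₂.submod hZ₁E hZ₂E
    rw [← hU] at s₁ s₂
    have hcU := hc (insert x U) (insert_subset hxE hUE)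
    have hcN := hc (Z₁ ∩ Z₂) (inter_subset_left.trans hZ₁E)
    have hcardU : (insert x U).ncard = U.ncard + 1 :=
      ncard_insert_of_notMem hxU (hE.subset hUE)
    have hcard2 : U.ncard + (Z₁ ∩ Z₂).ncard = Z₁.ncard + Z₂.ncard :=
      ncard_union_add_ncard_inter Z₁ Z₂ (hE.subset hZ₁E) (hE.subset hZ₂E)
    omega

end IsRkFn

namespace Matroid

variable {M : Matroid α} {I J X Y S : Set α} {e x : α}

/-- The (finite) rank of a set in a matroid, as a natural number. -/
noncomputable def frk (M : Matroid α) (X : Set α) : ℕ := (M.exists_isBasis' X).choose.ncard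

lemma IsBasis'.frk_eq (hI : M.IsBasis' I X) : M.frk X = I.ncard := by
  have h := (M.exists_isBasis' X).choose_spec
  have he := h.encard_eq_encard hI
  show (M.exists_isBasis' X).choose.ncard = I.ncard
  rw [ncard_def, he, ← ncard_def]

lemma Indep.frk_eq (hI : M.Indep I) : M.frk I = I.ncard :=
  (hI.isBasis_self.isBasis').frk_eq

lemma frk_empty (M : Matroid α) : M.frk ∅ = 0 := by
  rw [M.empty_indep.frk_eq, ncard_empty]

lemma Indep.ncard_le_frk (hfin : M.E.Finite) (hI : M.Indep I) (hIX : I ⊆ X) :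
    I.ncard ≤ M.frk X := by
  obtain ⟨J, hJ, hIJ⟩ := hI.subset_isBasis'_of_subset hIX
  rw [hJ.frk_eq]
  exact ncard_le_ncard hIJ (hfin.subset hJ.indep.subset_ground)

lemma frk_mono (hfin : M.E.Finite) (hXY : X ⊆ Y) : M.frk X ≤ M.frk Y := by
  obtain ⟨I, hI⟩ := M.exists_isBasis' X
  rw [hI.frk_eq]
  exact hI.indep.ncard_le_frk hfin (hI.subset.trans hXY)

lemma frk_insert_le (hfin : M.E.Finite) :
    M.frk (insert x X) ≤ M.frk X + 1 := by
  obtain ⟨I, hI⟩ := M.exists_isBasis' X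
  obtain ⟨J, hJ, hIJ⟩ := hI.indep.subset_isBasis'_of_subset
    (hI.subset.trans (subset_insert x X))
  have hJx : J ⊆ insert x I := by
    intro y hy
    rcases hJ.subset hy with rfl | hyX
    · exact mem_insert _ _
    · exact mem_insert_of_mem _ (hI.mem_of_insert_indep hyX
        (hJ.indep.subset (insert_subset hy hIJ)))
  have hIfin : I.Finite := hfin.subset hI.indep.subset_ground
  rw [hJ.frk_eq, hI.frk_eq]
  calc J.ncard ≤ (insert x I).ncard := ncard_le_ncard hJx (hIfin.insert x)
    _ ≤ I.ncard + 1 := ncard_insert_le x I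

lemma frk_submod (hfin : M.E.Finite) (X Y : Set α) :
    M.frk (X ∪ Y) + M.frk (X ∩ Y) ≤ M.frk X + M.frk Y := by
  obtain ⟨I, hI⟩ := M.exists_isBasis' (X ∩ Y)
  obtain ⟨J, hJ, hIJ⟩ := hI.indep.subset_isBasis'_of_subset
    (hI.subset.trans (inter_subset_left.trans subset_union_left))
  have hJfin : J.Finite := hfin.subset hJ.indep.subset_ground
  have hIeq : I = J ∩ (X ∩ Y) :=
    hI.eq_of_subset_indep (hJ.indep.inter_right _)
      (subset_inter hIJ hI.subset) inter_subset_right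
  have hu : (J ∩ X) ∪ (J ∩ Y) = J := by
    rw [← inter_union_distrib_left, inter_eq_self_of_subset_left hJ.subset]
  have hi : (J ∩ X) ∩ (J ∩ Y) = I := by
    rw [hIeq]; ext y; simp; tauto
  have hcard := ncard_union_add_ncard_inter (J ∩ X) (J ∩ Y)
    (hJfin.subset inter_subset_left) (hJfin.subset inter_subset_left)
  rw [hu, hi] at hcard
  have h1 : (J ∩ X).ncard ≤ M.frk X :=
    (hJ.indep.inter_right X).ncard_le_frk hfin inter_subset_right
  have h2 : (J ∩ Y).ncard ≤ M.frk Y :=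
    (hJ.indep.inter_right Y).ncard_le_frk hfin inter_subset_right
  rw [hJ.frk_eq, hI.frk_eq]
  omega

lemma frk_isRkFn (hfin : M.E.Finite) : IsRkFn M.E M.frk :=
  ⟨M.frk_empty, fun _ _ hAB _ => frk_mono hfin hAB,
    fun _ _ _ _ => frk_insert_le hfin,
    fun _ _ _ _ => frk_submod hfin _ _⟩

lemma mem_closure_of_frk_insert_le (hfin : M.E.Finite) (he : e ∈ M.E)
    (h : M.frk (insert e X) ≤ M.frk X) : e ∈ M.closure X := by
  by_cases heX : e ∈ X
  · exact M.mem_closure_of_mem' heX he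
  obtain ⟨I, hI⟩ := M.exists_isBasis' X
  by_contra hecl
  have heI : e ∉ I := fun hh => heX (hI.subset hh)
  have hind : M.Indep (insert e I) := by
    rw [hI.indep.insert_indep_iff_of_notMem heI, hI.closure_eq_closure]
    exact ⟨he, hecl⟩
  have hle := hind.ncard_le_frk hfin (insert_subset_insert hI.subset)
  have hIfin : I.Finite := hfin.subset hI.indep.subset_ground
  rw [ncard_insert_of_notMem heI hIfin] at hle
  rw [hI.frk_eq] at *
  omega

lemma spanning_restrict_of_frk (hfin : M.E.Finite) (hSX : S ⊆ X) (hXE : X ⊆ M.E)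
    (hr : M.frk X ≤ M.frk S) : (M ↾ X).Spanning S := by
  obtain ⟨I, hI⟩ := M.exists_isBasis' S
  obtain ⟨J, hJ, hIJ⟩ := hI.indep.subset_isBasis'_of_subset (hI.subset.trans hSX)
  have hJfin : J.Finite := hfin.subset hJ.indep.subset_ground
  have hJI : I = J := eq_of_subset_of_ncard_le hIJ
    (by rw [← hJ.frk_eq, ← hI.frk_eq]; exact hr) hJfin
  have hbase : (M ↾ X).IsBase I := by
    rw [isBase_restrict_iff']; rw [hJI]; exact hJ
  rw [spanning_iff_exists_isBase_subset']
  exact ⟨⟨I, hbase, hI.subset⟩, hSX.trans_eq rfl⟩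

lemma frk_dual_add (hfin : M.E.Finite) {Z : Set α} (hZ : Z ⊆ M.E) :
    M✶.frk Z + M.frk M.E = Z.ncard + M.frk (M.E \ Z) := by
  have hfinZ : Z.Finite := hfin.subset hZ
  obtain ⟨I₀, hI₀⟩ := M.exists_isBasis' (M.E \ Z)
  obtain ⟨B, hB, hI₀B⟩ := hI₀.indep.exists_isBase_superset
  have hBE : B ⊆ M.E := hB.subset_ground
  have hBfin : B.Finite := hfin.subset hBE
  have hrkE : M.frk M.E = B.ncard := (hB.isBasis_ground.isBasis').frk_eq
  have hI₀eq : I₀ = B ∩ (M.E \ Z) := hI₀.eq_of_subset_indep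
    (hB.indep.inter_right _) (subset_inter hI₀B hI₀.subset) inter_subset_right
  have hbz : B ∩ (M.E \ Z) = B \ Z := by
    rw [← inter_diff_assoc, inter_eq_self_of_subset_left hBE]
  rw [hbz] at hI₀eq
  have hsplitB : (B ∩ Z).ncard + (B \ Z).ncard = B.ncard :=
    ncard_inter_add_ncard_diff_eq_ncard B Z hBfin
  -- lower bound : Z \ B is coindependent
  have hco : M✶.Indep (Z \ B) := by
    rw [dual_indep_iff_exists (diff_subset.trans hZ)]
    exact ⟨B, hB, disjoint_sdiff_left⟩
  have hfinD : M✶.E.Finite := by rwa [dual_ground]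
  have hlow : (Z \ B).ncard ≤ M✶.frk Z := hco.ncard_le_frk hfinD diff_subset
  -- upper bound
  obtain ⟨J, hJ⟩ := M✶.exists_isBasis' Z
  have hJZ : J ⊆ Z := hJ.subset
  have hJfin : J.Finite := hfinZ.subset hJZ
  obtain ⟨B', hB', hdisj⟩ := (dual_indep_iff_exists (hJZ.trans hZ)).mp hJ.indep
  have hB'E : B' ⊆ M.E := hB'.subset_ground
  have hB'fin : B'.Finite := hfin.subset hB'E
  have hBB' : B'.ncard = B.ncard := hB'.ncard_eq_ncard_of_isBase hB
  have hsplitB' : (B' ∩ Z).ncard + (B' \ Z).ncard = B'.ncard :=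
    ncard_inter_add_ncard_diff_eq_ncard B' Z hB'fin
  have hup1 : (B' \ Z).ncard ≤ M.frk (M.E \ Z) := by
    have := (hB'.indep.subset (diff_subset : B' \ Z ⊆ B')).ncard_le_frk hfin
      (diff_subset_diff_left hB'E)
    exact this
  have hup2 : (B' ∩ Z).ncard ≤ (Z \ J).ncard := by
    refine ncard_le_ncard (fun y hy => ⟨hy.2, fun hyJ => ?_⟩) (hfinZ.diff)
    exact (hdisj.ne_of_mem hyJ hy.1) rfl
  have hZJ : (Z \ J).ncard + J.ncard = Z.ncard := by
    rw [ncard_diff hJZ hJfin]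
    have := ncard_le_ncard hJZ hfinZ
    omega
  have hsplitZ : (Z ∩ B).ncard + (Z \ B).ncard = Z.ncard :=
    ncard_inter_add_ncard_diff_eq_ncard Z B hfinZ
  have hbzc : (Z ∩ B).ncard = (B ∩ Z).ncard := by rw [inter_comm]
  have hI₀card : M.frk (M.E \ Z) = (B \ Z).ncard := by rw [hI₀.frk_eq, hI₀eq]
  rw [hJ.frk_eq] at hlow
  rw [hJ.frk_eq, hrkE, hI₀card]
  omega

end Matroid

namespace Matroid

lemma frk_compl_fn (R : Matroid α) (hfin : R.E.Finite) {X D : Set α} (hX : X ⊆ R.E)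
    (hD : D ⊆ X) (hrD : R.frk (X \ D) = R.frk X) :
    (∀ Z ⊆ X \ D, (Z.ncard + R.frk (X \ (Z ∪ D)) - R.frk X) + R.frk X
        = Z.ncard + R.frk (X \ (Z ∪ D))) ∧
    IsRkFn (X \ D) (fun Z => Z.ncard + R.frk (X \ (Z ∪ D)) - R.frk X) := by
  have hrk := frk_isRkFn hfin (M := R)
  have hGX : X \ D ⊆ X := diff_subset
  have hGE : X \ D ⊆ R.E := hGX.trans hX
  have hconv : ∀ Z : Set α, (X \ D) \ Z = X \ (Z ∪ D) := by
    intro Z; rw [diff_diff, union_comm]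
  have hid : ∀ Z ⊆ X \ D, (Z.ncard + R.frk (X \ (Z ∪ D)) - R.frk X) + R.frk X
      = Z.ncard + R.frk (X \ (Z ∪ D)) := by
    intro Z hZ
    have h1 : R.frk X ≤ R.frk ((X \ D) \ Z) + ((X \ D) \ ((X \ D) \ Z)).ncard := by
      rw [← hrD]
      exact hrk.diff_le hfin diff_subset hGE
    rw [diff_diff_cancel_left hZ, hconv] at h1
    omega
  refine ⟨hid, ⟨?_, ?_, ?_, ?_⟩⟩
  · have := hid ∅ (empty_subset _)
    have h0 : X \ (∅ ∪ D) = X \ D := by rw [empty_union]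
    show (∅ : Set α).ncard + R.frk (X \ (∅ ∪ D)) - R.frk X = 0
    rw [h0] at this ⊢
    simp only [ncard_empty] at this ⊢
    omega
  · intro A B hAB hB
    have hA : A ⊆ X \ D := hAB.trans hB
    have i₁ := hid A hA
    have i₂ := hid B hB
    have hd : R.frk (X \ (A ∪ D)) ≤ R.frk (X \ (B ∪ D))
        + ((X \ (A ∪ D)) \ (X \ (B ∪ D))).ncard := by
      exact hrk.diff_le hfin
        (diff_subset_diff_right (union_subset_union_left D hAB))
        (diff_subset.trans hX)
    have hsub2 : (X \ (A ∪ D)) \ (X \ (B ∪ D)) ⊆ B \ A := by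
      intro y hy
      have h1 := hy.1
      have h2 := hy.2
      simp only [mem_diff, mem_union, not_and, not_not, not_forall] at h1 h2 ⊢
      rcases not_or.mp h1.2 with ⟨hyA, hyD⟩
      rcases h2 h1.1 with hyB | hyD'
      · exact ⟨hyB, hyA⟩
      · exact absurd hyD' hyD
    have hfinBA : (B \ A).Finite := (hfin.subset (hB.trans hGE)).diff
    have hc : ((X \ (A ∪ D)) \ (X \ (B ∪ D))).ncard ≤ (B \ A).ncard :=
      ncard_le_ncard hsub2 hfinBA
    have hcBA : (B \ A).ncard + A.ncard = B.ncard :=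
      ncard_diff_add_ncard_of_subset hAB (hfin.subset (hB.trans hGE))
    show A.ncard + R.frk (X \ (A ∪ D)) - R.frk X ≤ B.ncard + R.frk (X \ (B ∪ D)) - R.frk X
    omega
  · intro x A hx hA
    by_cases hxA : x ∈ A
    · rw [insert_eq_of_mem hxA]; omega
    have hiA : insert x A ⊆ X \ D := insert_subset hx hA
    have i₁ := hid A hA
    have i₂ := hid (insert x A) hiA
    have hm : R.frk (X \ (insert x A ∪ D)) ≤ R.frk (X \ (A ∪ D)) := by
      refine frk_mono hfin (diff_subset_diff_right (union_subset_union_left _ ?_))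
      exact subset_insert x A
    have hcard : (insert x A).ncard = A.ncard + 1 :=
      ncard_insert_of_notMem hxA (hfin.subset (hA.trans hGE))
    show (insert x A).ncard + R.frk (X \ (insert x A ∪ D)) - R.frk X
      ≤ A.ncard + R.frk (X \ (A ∪ D)) - R.frk X + 1
    omega
  · intro A B hA hB
    have hAB : A ∪ B ⊆ X \ D := union_subset hA hB
    have hABi : A ∩ B ⊆ X \ D := inter_subset_left.trans hA
    have i₁ := hid A hA
    have i₂ := hid B hB
    have i₃ := hid (A ∪ B) hAB
    have i₄ := hid (A ∩ B) hABi
    have e₁ : (X \ (A ∪ D)) ∪ (X \ (B ∪ D)) = X \ ((A ∩ B) ∪ D) := by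
      ext y; simp only [mem_union, mem_diff, mem_inter_iff, not_or]; tauto
    have e₂ : (X \ (A ∪ D)) ∩ (X \ (B ∪ D)) = X \ ((A ∪ B) ∪ D) := by
      rw [diff_inter_diff]
      congr 1
      ext y; simp only [mem_union]; tauto
    have hsm := frk_submod hfin (M := R) (X \ (A ∪ D)) (X \ (B ∪ D))
    rw [e₁, e₂] at hsm
    have hc := ncard_union_add_ncard_inter A B (hfin.subset (hA.trans hGE))
      (hfin.subset (hB.trans hGE))
    show (A ∪ B).ncard + R.frk (X \ ((A ∪ B) ∪ D)) - R.frk X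
        + ((A ∩ B).ncard + R.frk (X \ ((A ∩ B) ∪ D)) - R.frk X)
      ≤ (A.ncard + R.frk (X \ (A ∪ D)) - R.frk X)
        + (B.ncard + R.frk (X \ (B ∪ D)) - R.frk X)
    omega

lemma mkWaveD (P Q : Matroid α) (hQE : Q.E = P.E) (hfin : P.E.Finite)
    {X D : Set α} (hX : X ⊆ P.E) (hD : D ⊆ X)
    (hrD : P.frk (X \ D) = P.frk X)
    (hcond : ∀ Z ⊆ X \ D,
      P.frk X + Q.frk X ≤ Z.ncard + P.frk (X \ (Z ∪ D)) + Q.frk (X \ Z)) :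
    ∃ S T, IsWave P Q X S T ∧ D ⊆ T := by
  have hfinQ : Q.E.Finite := hQE ▸ hfin
  have hXQ : X ⊆ Q.E := hQE ▸ hX
  obtain ⟨id₁, h₁⟩ := P.frk_compl_fn hfin hX hD hrD
  have hrD₂ : Q.frk (X \ ∅) = Q.frk X := by rw [diff_empty]
  obtain ⟨id₂, h₂'⟩ := Q.frk_compl_fn hfinQ hXQ (empty_subset X) hrD₂
  have hGsub : X \ D ⊆ X \ ∅ := by rw [diff_empty]; exact diff_subset
  have h₂ := h₂'.subset hGsub
  have hGfin : (X \ D).Finite := (hfin.subset hX).diff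
  have hcnd : ∀ Z ⊆ X \ D, Z.ncard ≤
      (fun Z => Z.ncard + P.frk (X \ (Z ∪ D)) - P.frk X) Z
      + (fun Z => Z.ncard + Q.frk (X \ (Z ∪ ∅)) - Q.frk X) Z := by
    intro Z hZ
    have i₁ := id₁ Z hZ
    have i₂ := id₂ Z (hZ.trans hGsub)
    have hc := hcond Z hZ
    rw [union_empty] at i₂
    show Z.ncard ≤ (Z.ncard + P.frk (X \ (Z ∪ D)) - P.frk X)
      + (Z.ncard + Q.frk (X \ (Z ∪ ∅)) - Q.frk X)
    rw [union_empty]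
    omega
  obtain ⟨I, J, hIG, hJG, hIJ, hI, hJ⟩ :=
    IsRkFn.cov (X \ D).ncard (X \ D) _ _ hGfin le_rfl h₁ h₂ hcnd
  replace hI : I.ncard + P.frk (X \ (I ∪ D)) - P.frk X = I.ncard := hI
  replace hJ : J.ncard + Q.frk (X \ (J ∪ ∅)) - Q.frk X = J.ncard := hJ
  rw [union_empty] at hJ
  have i₁ := id₁ I hIG
  have i₂ := id₂ J (hJG.trans hGsub)
  rw [union_empty] at i₂
  have rS : P.frk (X \ (I ∪ D)) = P.frk X := by omega
  have rT : Q.frk (X \ J) = Q.frk X := by omega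
  refine ⟨X \ (I ∪ D), X \ J, ⟨diff_subset, diff_subset, hX, ?_, ?_, ?_⟩, ?_⟩
  · rw [disjoint_iff_inter_eq_empty, diff_inter_diff]
    have : (I ∪ D) ∪ J = X := by
      rw [union_right_comm, hIJ, diff_union_of_subset hD]
    rw [this, diff_self]
  · exact spanning_restrict_of_frk hfin diff_subset hX rS.ge
  · exact spanning_restrict_of_frk hfinQ diff_subset hXQ rT.ge
  · exact fun d hd => ⟨hD hd, fun hdJ => (hJG hdJ).2 hd⟩

end Matroid

/-- Feasibility (the rank-theoretic description of supporting a wave). -/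
def Feas (r₁ r₂ : Set α → ℕ) (W : Set α) : Prop :=
  ∀ Y ⊆ W, r₁ W + r₂ W + Y.ncard ≤ r₁ Y + r₂ Y + W.ncard

lemma feas_empty (r₁ r₂ : Set α → ℕ) : Feas r₁ r₂ ∅ := by
  intro Y hY
  rw [subset_empty_iff] at hY
  rw [hY]

lemma Feas.union {E : Set α} (hE : E.Finite) {r₁ r₂ : Set α → ℕ}
    (h₁ : IsRkFn E r₁) (h₂ : IsRkFn E r₂) {Z₁ Z₂ : Set α} (hZ₁ : Z₁ ⊆ E) (hZ₂ : Z₂ ⊆ E)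
    (f₁ : Feas r₁ r₂ Z₁) (f₂ : Feas r₁ r₂ Z₂) : Feas r₁ r₂ (Z₁ ∪ Z₂) := by
  intro Y hY
  have hYE : Y ⊆ E := hY.trans (union_subset hZ₁ hZ₂)
  have s₁ := h₁.submod hYE hZ₁
  have s₁' := h₂.submod hYE hZ₁
  have fe₁ := f₁ (Y ∩ Z₁) inter_subset_right
  have c₁ := ncard_union_add_ncard_inter Y Z₁ (hE.subset hYE) (hE.subset hZ₁)
  have s₂ := h₁.submod (union_subset hYE hZ₁) hZ₂
  have s₂' := h₂.submod (union_subset hYE hZ₁) hZ₂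
  have e2 : (Y ∪ Z₁) ∪ Z₂ = Z₁ ∪ Z₂ := by
    rw [union_assoc, union_eq_self_of_subset_left hY]
  rw [e2] at s₂ s₂'
  have fe₂ := f₂ ((Y ∪ Z₁) ∩ Z₂) inter_subset_right
  have c₂ := ncard_union_add_ncard_inter (Y ∪ Z₁) Z₂
    (hE.subset (union_subset hYE hZ₁)) (hE.subset hZ₂)
  rw [e2] at c₂
  omega

lemma feas_sUnion {E : Set α} (hE : E.Finite) {r₁ r₂ : Set α → ℕ}
    (h₁ : IsRkFn E r₁) (h₂ : IsRkFn E r₂) {F : Set (Set α)} (hF : F.Finite)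
    (hFE : ∀ W ∈ F, W ⊆ E) (hfeas : ∀ W ∈ F, Feas r₁ r₂ W) :
    Feas r₁ r₂ (⋃₀ F) := by
  refine Set.Finite.induction_on
    (motive := fun F _ => (∀ W ∈ F, W ⊆ E) → (∀ W ∈ F, Feas r₁ r₂ W) → Feas r₁ r₂ (⋃₀ F))
    F hF ?_ ?_ hFE hfeas
  · intro _ _
    simpa [sUnion_empty] using feas_empty r₁ r₂
  · intro a s _ _ ih hFE' hfeas'
    rw [sUnion_insert]
    exact (hfeas' a (mem_insert _ _)).union hE h₁ h₂ (hFE' a (mem_insert _ _))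
      (sUnion_subset fun W hW => hFE' W (mem_insert_of_mem _ hW))
      (ih (fun W hW => hFE' W (mem_insert_of_mem _ hW))
        (fun W hW => hfeas' W (mem_insert_of_mem _ hW)))

/-- At least one of the promises `M₊` and `M₋^*` is attainable in any arena. -/
theorem Mplus_or_Mminus_star (M N : Matroid α) (hE : M.E = N.E) (hfin : M.E.Finite)
    (e : α) (he : e ∈ M.E) :
    (∃ W SM SN, IsWave M N W SM SN ∧ e ∉ W ∧ e ∈ M.closure W) ∨
    (∃ X TM TN, IsWave M✶ N✶ X TM TN ∧ e ∈ TN) := by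
  classical
  by_cases hA : ∃ W SM SN, IsWave M N W SM SN ∧ e ∉ W ∧ e ∈ M.closure W
  · exact Or.inl hA
  right
  have hfinN : N.E.Finite := hE ▸ hfin
  have hrM := frk_isRkFn hfin
  have hrN : IsRkFn N.E N.frk := frk_isRkFn hfinN
  have hrN' : IsRkFn M.E N.frk := hE ▸ hrN
  -- turning feasibility into waves
  have mkwave : ∀ V ⊆ M.E, Feas M.frk N.frk V → ∃ S T, IsWave M N V S T := by
    intro V hV hfeas
    have hVfin : V.Finite := hfin.subset hV
    have hrD : M.frk (V \ (∅ : Set α)) = M.frk V := by rw [diff_empty]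
    have hcond : ∀ Z ⊆ V \ (∅ : Set α),
        M.frk V + N.frk V ≤ Z.ncard + M.frk (V \ (Z ∪ ∅)) + N.frk (V \ Z) := by
      intro Z hZ
      rw [diff_empty] at hZ
      rw [union_empty]
      have hfe := hfeas (V \ Z) diff_subset
      have hc : (V \ Z).ncard + Z.ncard = V.ncard :=
        ncard_diff_add_ncard_of_subset hZ hVfin
      omega
    obtain ⟨S, T, hw, _⟩ := mkWaveD M N hE.symm hfin hV (empty_subset V) hrD hcond
    exact ⟨S, T, hw⟩
  -- the union of all feasible sets avoiding e
  set 𝒲 := {W : Set α | W ⊆ M.E \ {e} ∧ Feas M.frk N.frk W} with h𝒲def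
  have h𝒲fin : 𝒲.Finite := ((hfin.diff (t := {e})).finite_subsets).subset fun W hW => hW.1
  set W₀ := ⋃₀ 𝒲 with hW₀def
  have hW₀e : W₀ ⊆ M.E \ {e} := sUnion_subset fun W hW => hW.1
  have hW₀E : W₀ ⊆ M.E := hW₀e.trans diff_subset
  have hW₀feas : Feas M.frk N.frk W₀ := feas_sUnion hfin hrM hrN' h𝒲fin
    (fun W hW => hW.1.trans diff_subset) (fun W hW => hW.2)
  have heW₀ : e ∉ W₀ := fun h => (hW₀e h).2 rfl
  -- no feasible subset of E \ {e} spans e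
  have notA : ∀ V, V ⊆ M.E \ {e} → Feas M.frk N.frk V → e ∉ M.closure V := by
    intro V hV hfeas hecl
    obtain ⟨S, T, hw⟩ := mkwave V (hV.trans diff_subset) hfeas
    exact hA ⟨V, S, T, hw, fun h => (hV h).2 rfl, hecl⟩
  have hstep : M.frk (insert e W₀) = M.frk W₀ + 1 := by
    have h1 : M.frk (insert e W₀) ≤ M.frk W₀ + 1 := frk_insert_le hfin
    have h2 : M.frk W₀ ≤ M.frk (insert e W₀) := frk_mono hfin (subset_insert _ _)
    by_contra hne
    have hle : M.frk (insert e W₀) ≤ M.frk W₀ := by omega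
    exact notA W₀ hW₀e hW₀feas (mem_closure_of_frk_insert_le hfin he hle)
  -- the key inequality
  have hstar : ∀ V, W₀ ⊆ V → V ⊆ M.E \ {e} →
      M.frk W₀ + N.frk W₀ + V.ncard + 1 ≤ M.frk (insert e V) + N.frk V + W₀.ncard := by
    intro V hWV hVE
    have hVEg : V ⊆ M.E := hVE.trans diff_subset
    have hVfin : V.Finite := hfin.subset hVEg
    by_contra hfail
    push_neg at hfail
    obtain ⟨Y₀, hY₀mem, hY₀min⟩ := Set.exists_min_image {Y | Y ⊆ V}
      (fun Y => M.frk Y + N.frk Y + (V \ Y).ncard) hVfin.finite_subsets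
      ⟨V, by simp⟩
    have hY₀V : Y₀ ⊆ V := hY₀mem
    have cardW : (V \ W₀).ncard + W₀.ncard = V.ncard :=
      ncard_diff_add_ncard_of_subset hWV hVfin
    have cardY₀ : (V \ Y₀).ncard + Y₀.ncard = V.ncard :=
      ncard_diff_add_ncard_of_subset hY₀V hVfin
    have hgW : M.frk W₀ + N.frk W₀ + (V \ W₀).ncard
        ≤ M.frk Y₀ + N.frk Y₀ + (V \ Y₀).ncard := by
      by_contra hlt
      push_neg at hlt
      have hfeasY : Feas M.frk N.frk Y₀ := by
        intro Y hY
        have h : M.frk Y₀ + N.frk Y₀ + (V \ Y₀).ncard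
            ≤ M.frk Y + N.frk Y + (V \ Y).ncard := hY₀min Y (hY.trans hY₀V)
        have cY : (V \ Y).ncard + Y.ncard = V.ncard :=
          ncard_diff_add_ncard_of_subset (hY.trans hY₀V) hVfin
        omega
      have hY₀W : Y₀ ⊆ W₀ := subset_sUnion_of_mem ⟨hY₀V.trans hVE, hfeasY⟩
      have hfW := hW₀feas Y₀ hY₀W
      omega
    have hgV : M.frk Y₀ + N.frk Y₀ + (V \ Y₀).ncard
        ≤ M.frk V + N.frk V + (V \ V).ncard := hY₀min V (by simp)
    have hdVV : (V \ V).ncard = 0 := by simp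
    have hm1 : M.frk V ≤ M.frk (insert e V) := frk_mono hfin (subset_insert _ _)
    have hecl : M.frk (insert e V) ≤ M.frk V := by omega
    have hfeasV : Feas M.frk N.frk V := by
      intro Y hY
      have h : M.frk Y₀ + N.frk Y₀ + (V \ Y₀).ncard
          ≤ M.frk Y + N.frk Y + (V \ Y).ncard := hY₀min Y hY
      have cY : (V \ Y).ncard + Y.ncard = V.ncard :=
        ncard_diff_add_ncard_of_subset hY hVfin
      omega
    exact notA V hVE hfeasV (mem_closure_of_frk_insert_le hfin he hecl)
  -- set up the dual pair
  have hfind : M✶.E.Finite := by rwa [dual_ground]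
  have hQE : N✶.E = M✶.E := by rw [dual_ground, dual_ground, hE]
  have hXE : (M.E \ W₀ : Set α) ⊆ M✶.E := by rw [dual_ground]; exact diff_subset
  have heX : e ∈ M.E \ W₀ := ⟨he, heW₀⟩
  have hXfin : (M.E \ W₀).Finite := hfin.diff
  have hDX : ({e} : Set α) ⊆ M.E \ W₀ := singleton_subset_iff.mpr heX
  have dualM : ∀ Z ⊆ M.E, M✶.frk Z + M.frk M.E = Z.ncard + M.frk (M.E \ Z) :=
    fun Z hZ => frk_dual_add hfin hZ
  have dualN : ∀ Z ⊆ M.E, N✶.frk Z + N.frk M.E = Z.ncard + N.frk (M.E \ Z) := by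
    intro Z hZ
    have h := frk_dual_add hfinN (Z := Z) (by rw [← hE]; exact hZ)
    rwa [← hE] at h
  have cEX : M.E \ (M.E \ W₀) = W₀ := diff_diff_cancel_left hW₀E
  have hXcard : 1 ≤ (M.E \ W₀).ncard := (ncard_pos hXfin).mpr ⟨e, heX⟩
  have hXecard : ((M.E \ W₀) \ {e}).ncard = (M.E \ W₀).ncard - 1 :=
    ncard_diff_singleton_of_mem heX
  have cc : M.E \ ((M.E \ W₀) \ {e}) = insert e W₀ := by
    rw [diff_diff_right, diff_diff_cancel_left hW₀E,
      inter_eq_self_of_subset_right (singleton_subset_iff.mpr he), union_singleton]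
  have hrD : M✶.frk ((M.E \ W₀) \ {e}) = M✶.frk (M.E \ W₀) := by
    have h1 := dualM ((M.E \ W₀) \ {e}) (diff_subset.trans diff_subset)
    have h2 := dualM (M.E \ W₀) diff_subset
    rw [cc] at h1
    rw [cEX] at h2
    omega
  have hcond : ∀ Z ⊆ (M.E \ W₀) \ {e}, M✶.frk (M.E \ W₀) + N✶.frk (M.E \ W₀)
      ≤ Z.ncard + M✶.frk ((M.E \ W₀) \ (Z ∪ {e})) + N✶.frk ((M.E \ W₀) \ Z) := by
    intro Z hZ
    have hZX : Z ⊆ M.E \ W₀ := hZ.trans diff_subset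
    have hZE : Z ⊆ M.E := hZX.trans diff_subset
    have hZfin : Z.Finite := hfin.subset hZE
    have heZ : e ∉ Z := fun h => (hZ h).2 rfl
    have hZEe : Z ⊆ M.E \ {e} := fun z hz => ⟨hZE hz, (hZ hz).2⟩
    have hVW₀ : W₀ ⊆ W₀ ∪ Z := subset_union_left
    have hVEe : W₀ ∪ Z ⊆ M.E \ {e} := union_subset hW₀e hZEe
    have hst := hstar (W₀ ∪ Z) hVW₀ hVEe
    have hdisj : Disjoint W₀ Z := Set.disjoint_left.mpr fun a haW haZ => (hZX haZ).2 haW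
    have cardV : (W₀ ∪ Z).ncard = W₀.ncard + Z.ncard :=
      ncard_union_eq hdisj (hfin.subset hW₀E) hZfin
    have c1 : M.E \ ((M.E \ W₀) \ Z) = W₀ ∪ Z := by
      rw [diff_diff_right, diff_diff_cancel_left hW₀E,
        inter_eq_self_of_subset_right hZE]
    have c2 : M.E \ ((M.E \ W₀) \ (Z ∪ {e})) = insert e (W₀ ∪ Z) := by
      rw [diff_diff_right, diff_diff_cancel_left hW₀E,
        inter_eq_self_of_subset_right (union_subset hZE (singleton_subset_iff.mpr he)),
        ← union_assoc, union_singleton]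
    have dX_M := dualM (M.E \ W₀) diff_subset
    rw [cEX] at dX_M
    have dX_N := dualN (M.E \ W₀) diff_subset
    rw [cEX] at dX_N
    have dZ_M := dualM ((M.E \ W₀) \ (Z ∪ {e})) (diff_subset.trans diff_subset)
    rw [c2] at dZ_M
    have dZ_N := dualN ((M.E \ W₀) \ Z) (diff_subset.trans diff_subset)
    rw [c1] at dZ_N
    have cZ1 : ((M.E \ W₀) \ Z).ncard + Z.ncard = (M.E \ W₀).ncard :=
      ncard_diff_add_ncard_of_subset hZX hXfin
    have hZeX : Z ∪ {e} ⊆ M.E \ W₀ := union_subset hZX hDX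
    have cZ2 : ((M.E \ W₀) \ (Z ∪ {e})).ncard + (Z ∪ {e}).ncard = (M.E \ W₀).ncard :=
      ncard_diff_add_ncard_of_subset hZeX hXfin
    have cZe : (Z ∪ {e}).ncard = Z.ncard + 1 := by
      rw [union_singleton, ncard_insert_of_notMem heZ hZfin]
    omega
  obtain ⟨S, T, hw, heT⟩ := mkWaveD M✶ N✶ hQE hfind hXE hDX hrD hcond
  exact ⟨M.E \ W₀, S, T, hw, heT rfl⟩
end

section
/- An up-closed subset B of the set of promises and co-promises P ∪ P* is blocking (i.e., meets each of the 5 possible attainability sets) if and only if B includes one of the following ten sets: {⊥}, {⊥*}, {M_+, M_-^*}, {M_-, M_+^*}, {N_+, N_-^*}, {N_-, N_+^*}, {M_+, N_-, ⊤*}, {M_-, N_+, ⊤*}, {M_+^*, N_-^*, ⊤}, {M_-^*, N_+^*, ⊤}. -/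
/-- The set of promises `{⊥, M₋, M₊, N₋, N₊, ⊤}`. -/
inductive Promise : Type
  | bot | Mm | Mp | Nm | Np | top
  deriving DecidableEq

/-- The partial order on promises generated by `⊤ ≥ M₊ ≥ M₋ ≥ ⊥` and `⊤ ≥ N₊ ≥ N₋ ≥ ⊥`. -/
def ple : Promise → Promise → Prop
  | Promise.bot, _ => True
  | _, Promise.top => True
  | Promise.Mm, Promise.Mm => True
  | Promise.Mm, Promise.Mp => True
  | Promise.Mp, Promise.Mp => True
  | Promise.Nm, Promise.Nm => True
  | Promise.Nm, Promise.Np => True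
  | Promise.Np, Promise.Np => True
  | _, _ => False

/-- Promises and co-promises: `Sum.inl` is a promise, `Sum.inr` a co-promise. -/
abbrev PP := Promise ⊕ Promise

/-- The order on promises and co-promises: the orders on the two copies, with no
comparabilities between promises and co-promises. -/
def pple : PP → PP → Prop
  | Sum.inl p, Sum.inl q => ple p q
  | Sum.inr p, Sum.inr q => ple p q
  | _, _ => False

/-- Up-closed subsets of `PP`. -/
def UpClosed (B : Set PP) : Prop := ∀ x ∈ B, ∀ y, pple x y → y ∈ B

/-- The five possible attainability sets. -/
def attainSet1 : Set PP := Sum.inl '' Set.univ ∪ {Sum.inr Promise.bot}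
def attainSet2 : Set PP := Sum.inr '' Set.univ ∪ {Sum.inl Promise.bot}
def attainSet3 : Set PP :=
  {Sum.inl Promise.bot, Sum.inl Promise.Mm, Sum.inl Promise.Mp,
   Sum.inr Promise.bot, Sum.inr Promise.Nm, Sum.inr Promise.Np}
def attainSet4 : Set PP :=
  {Sum.inl Promise.bot, Sum.inl Promise.Nm, Sum.inl Promise.Np,
   Sum.inr Promise.bot, Sum.inr Promise.Mm, Sum.inr Promise.Mp}
def attainSet5 : Set PP :=
  {Sum.inl Promise.bot, Sum.inl Promise.Mm, Sum.inl Promise.Nm,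
   Sum.inr Promise.bot, Sum.inr Promise.Mm, Sum.inr Promise.Nm}

/-- A set of promises and co-promises is blocking if it meets each of the five
possible attainability sets. -/
def Blocking (B : Set PP) : Prop :=
  (B ∩ attainSet1).Nonempty ∧ (B ∩ attainSet2).Nonempty ∧ (B ∩ attainSet3).Nonempty ∧
  (B ∩ attainSet4).Nonempty ∧ (B ∩ attainSet5).Nonempty


instance : Fintype Promise :=
  ⟨{Promise.bot, Promise.Mm, Promise.Mp, Promise.Nm, Promise.Np, Promise.top}, fun x => by cases x <;> simp⟩

instance : DecidableRel ple := fun p q => by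
  cases p <;> cases q <;> simp only [ple] <;> infer_instance

instance : DecidableRel pple := fun x y => by
  cases x <;> cases y <;> simp only [pple] <;> infer_instance

open Promise in
def L1 : List PP := [Sum.inl bot, Sum.inl Mm, Sum.inl Mp, Sum.inl Nm, Sum.inl Np,
  Sum.inl top, Sum.inr bot]
open Promise in
def L2 : List PP := [Sum.inr bot, Sum.inr Mm, Sum.inr Mp, Sum.inr Nm, Sum.inr Np,
  Sum.inr top, Sum.inl bot]
open Promise in
def L3 : List PP := [Sum.inl bot, Sum.inl Mm, Sum.inl Mp, Sum.inr bot, Sum.inr Nm, Sum.inr Np]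
open Promise in
def L4 : List PP := [Sum.inl bot, Sum.inl Nm, Sum.inl Np, Sum.inr bot, Sum.inr Mm, Sum.inr Mp]
open Promise in
def L5 : List PP := [Sum.inl bot, Sum.inl Mm, Sum.inl Nm, Sum.inr bot, Sum.inr Mm, Sum.inr Nm]

abbrev upB (f : PP → Bool) : Prop := ∀ x y, pple x y → f x = true → f y = true

open Promise in
def mk (a b c d e t a' b' c' d' e' t' : Bool) : PP → Bool
  | .inl .bot => a | .inl .Mm => b | .inl .Mp => c
  | .inl .Nm => d | .inl .Np => e | .inl .top => t
  | .inr .bot => a' | .inr .Mm => b' | .inr .Mp => c'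
  | .inr .Nm => d' | .inr .Np => e' | .inr .top => t'

open Promise in
set_option maxHeartbeats 4000000 in
set_option maxRecDepth 10000 in
theorem key : ∀ a b c d e t a' b' c' d' e' t' : Bool, ∀ f : PP → Bool,
    f = mk a b c d e t a' b' c' d' e' t' → upB f →
    ((L1.any f = true ∧ L2.any f = true ∧ L3.any f = true ∧ L4.any f = true ∧
      L5.any f = true) ↔
     (f (Sum.inl bot) = true ∨ f (Sum.inr bot) = true ∨
      (f (Sum.inl Mp) = true ∧ f (Sum.inr Mm) = true) ∨
      (f (Sum.inl Mm) = true ∧ f (Sum.inr Mp) = true) ∨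
      (f (Sum.inl Np) = true ∧ f (Sum.inr Nm) = true) ∨
      (f (Sum.inl Nm) = true ∧ f (Sum.inr Np) = true) ∨
      (f (Sum.inl Mp) = true ∧ f (Sum.inl Nm) = true ∧ f (Sum.inr top) = true) ∨
      (f (Sum.inl Mm) = true ∧ f (Sum.inl Np) = true ∧ f (Sum.inr top) = true) ∨
      (f (Sum.inr Mp) = true ∧ f (Sum.inr Nm) = true ∧ f (Sum.inl top) = true) ∨
      (f (Sum.inr Mm) = true ∧ f (Sum.inr Np) = true ∧ f (Sum.inl top) = true))) := by
  rintro a b c d e t a' b' c' d' e' t' f rfl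
  revert a b c d e t a' b' c' d' e' t'
  decide

open Promise in
lemma mem1 : ∀ x : PP, x ∈ attainSet1 ↔ x ∈ L1 := by
  rintro (p | p) <;> cases p <;> simp [attainSet1, L1]
open Promise in
lemma mem2 : ∀ x : PP, x ∈ attainSet2 ↔ x ∈ L2 := by
  rintro (p | p) <;> cases p <;> simp [attainSet2, L2]
open Promise in
lemma mem3 : ∀ x : PP, x ∈ attainSet3 ↔ x ∈ L3 := by
  rintro (p | p) <;> cases p <;> simp [attainSet3, L3]
open Promise in
lemma mem4 : ∀ x : PP, x ∈ attainSet4 ↔ x ∈ L4 := by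
  rintro (p | p) <;> cases p <;> simp [attainSet4, L4]
open Promise in
lemma mem5 : ∀ x : PP, x ∈ attainSet5 ↔ x ∈ L5 := by
  rintro (p | p) <;> cases p <;> simp [attainSet5, L5]


open Promise

/-- Characterisation of up-closed blocking sets. -/
theorem blocking_iff_contains (B : Set PP) (hB : UpClosed B) :
    Blocking B ↔
      (({Sum.inl bot} : Set PP) ⊆ B ∨
       ({Sum.inr bot} : Set PP) ⊆ B ∨
       ({Sum.inl Mp, Sum.inr Mm} : Set PP) ⊆ B ∨
       ({Sum.inl Mm, Sum.inr Mp} : Set PP) ⊆ B ∨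
       ({Sum.inl Np, Sum.inr Nm} : Set PP) ⊆ B ∨
       ({Sum.inl Nm, Sum.inr Np} : Set PP) ⊆ B ∨
       ({Sum.inl Mp, Sum.inl Nm, Sum.inr top} : Set PP) ⊆ B ∨
       ({Sum.inl Mm, Sum.inl Np, Sum.inr top} : Set PP) ⊆ B ∨
       ({Sum.inr Mp, Sum.inr Nm, Sum.inl top} : Set PP) ⊆ B ∨
       ({Sum.inr Mm, Sum.inr Np, Sum.inl top} : Set PP) ⊆ B) := by
  classical
  set f : PP → Bool := fun x => decide (x ∈ B) with hfdef
  have hf : ∀ x, f x = true ↔ x ∈ B := fun x => by simp [hfdef]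
  have hup : upB f := fun x y hxy hx => (hf y).2 (hB x ((hf x).1 hx) y hxy)
  have feq : f = mk (f (Sum.inl bot)) (f (Sum.inl Mm)) (f (Sum.inl Mp)) (f (Sum.inl Nm))
      (f (Sum.inl Np)) (f (Sum.inl top)) (f (Sum.inr bot)) (f (Sum.inr Mm)) (f (Sum.inr Mp))
      (f (Sum.inr Nm)) (f (Sum.inr Np)) (f (Sum.inr top)) := by
    funext x; rcases x with p | p <;> cases p <;> rfl
  have hkey := key _ _ _ _ _ _ _ _ _ _ _ _ f feq hup
  have hne : ∀ (S : Set PP) (L : List PP), (∀ x, x ∈ S ↔ x ∈ L) →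
      ((B ∩ S).Nonempty ↔ L.any f = true) := by
    intro S L hSL
    rw [List.any_eq_true]
    constructor
    · rintro ⟨x, hxB, hxS⟩
      exact ⟨x, (hSL x).1 hxS, (hf x).2 hxB⟩
    · rintro ⟨x, hxL, hxf⟩
      exact ⟨x, (hf x).1 hxf, (hSL x).2 hxL⟩
  have e1 := hne _ _ mem1
  have e2 := hne _ _ mem2
  have e3 := hne _ _ mem3
  have e4 := hne _ _ mem4
  have e5 := hne _ _ mem5
  simp only [Blocking, e1, e2, e3, e4, e5, Set.insert_subset_iff,
    Set.singleton_subset_iff, ← hf]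
  exact hkey
end
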